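/- arXiv:1010.3039 — 5 statements merged into one kernel-verified Lean document; each statement's English description precedes it below -/
import Mathlib

section
/- Over the alphabet A = {x, y, z}, the 3-variable language L = {(y, x^n, x^{2n}) : n >= 0} union {(z, x^{2n}, x^n) : n >= 0} is quasi-regular, but its projection {(b, c) in (A*)^2 : there exists a in A* with (a, b, c) in L} = {(x^n, x^{2n}) : n >= 0} union {(x^{2n}, x^n) : n >= 0} is not quasi-regular. In particular, the projection of a quasi-regular language need not be quasi-regular. -/
/-- An `n`-tape semi-sorted (deterministic) asynchronous automaton over `A`:
a partial deterministic finite state automaton over `A ∪ {$}` (unique start state,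
no `ε`-transitions, at most one transition from each state for each letter; the
padding symbol `$` is modelled by `none : Option A`), together with a partition of
its states into `n` sets (recorded by `tape`, where `tape s = i` means `s ∈ S_i`). -/
structure SemiSortedAA (A : Type) (n : ℕ) where
  State : Type
  fintype : Fintype State
  start : State
  accept : Set State
  /-- partial deterministic transition function over the alphabet `A ∪ {$}` -/
  step : State → Option A → Option State
  /-- the index `i` such that the state lies in `S_i` -/
  tape : State → Fin n

namespace SemiSortedAA

variable {A : Type} {n : ℕ}

/-- `M.Run s r f` : starting in state `s` with remaining (still unread) content `r i`
on the `i`-th tape, the automaton can consume all the remaining content and end in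
state `f`, where from a state `s` it reads the next letter of tape `M.tape s`.
This is exactly the existence of a shuffle of the tape contents labelling a path
from `s` to `f` in which every letter originating from the `i`-th tape is read
while the automaton is in a state of `S_i`. -/
inductive Run (M : SemiSortedAA A n) :
    M.State → (Fin n → List (Option A)) → M.State → Prop
  | nil (s : M.State) : Run M s (fun _ => []) s
  | step {s t f : M.State} {c : Option A} {rest : List (Option A)}
      {r : Fin n → List (Option A)}
      (h : M.step s c = some t)
      (hr : r (M.tape s) = c :: rest)
      (hrun : Run M t (Function.update r (M.tape s) rest) f) :
      Run M s r f

/-- `M` accepts the tuple of words `(w 1, …, w n)` if some shuffle of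
`(w 1 $, …, w n $)` labels a path from the start state to an accept state,
each letter from the `i`-th word (including its terminal `$`) being read in `S_i`. -/
def Accepts (M : SemiSortedAA A n) (w : Fin n → List A) : Prop :=
  ∃ f ∈ M.accept, M.Run M.start (fun i => (w i).map some ++ [none]) f

end SemiSortedAA

/-- An `n`-variable language is quasi-regular if it is the language accepted by some
`n`-tape semi-sorted asynchronous automaton. -/
def IsQuasiRegular {A : Type} {n : ℕ} (L : Set (Fin n → List A)) : Prop :=
  ∃ M : SemiSortedAA A n, ∀ w, w ∈ L ↔ M.Accepts w

/-- The three-variable language `{(y, x^n, x^{2n})} ∪ {(z, x^{2n}, x^n)}` over the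
alphabet `{x, y, z}` (modelled by `Fin 3` with `x = 0`, `y = 1`, `z = 2`). -/
def L₉ : Set (Fin 3 → List (Fin 3)) :=
  { w | (∃ m : ℕ, w 0 = [1] ∧ w 1 = List.replicate m 0 ∧
            w 2 = List.replicate (2 * m) 0) ∨
        (∃ m : ℕ, w 0 = [2] ∧ w 1 = List.replicate (2 * m) 0 ∧
            w 2 = List.replicate m 0) }

/-- The projection of `L₉` obtained by existentially quantifying the first
coordinate. -/
def proj₉ : Set (Fin 2 → List (Fin 3)) :=
  { v | ∃ a : List (Fin 3), Fin.cons a v ∈ L₉ }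

section AuxGeneric

open SemiSortedAA in
lemma run_inv {A : Type} {n : ℕ} {M : SemiSortedAA A n} {s f : M.State}
    {r : Fin n → List (Option A)} (h : M.Run s r f) :
    (s = f ∧ r = fun _ => []) ∨
      ∃ c rest t, M.step s c = some t ∧ r (M.tape s) = c :: rest ∧
        M.Run t (Function.update r (M.tape s) rest) f := by
  cases h with
  | nil => exact Or.inl ⟨rfl, rfl⟩
  | step h hr hrun => exact Or.inr ⟨_, _, _, h, hr, hrun⟩

lemma fin2 (i : Fin 2) : i = 0 ∨ i = 1 := by omega
lemma fin3 (i : Fin 3) : i = 0 ∨ i = 1 ∨ i = 2 := by omega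

end AuxGeneric

section Part1

inductive St9 where
  | q0 | qY | qZ | ya | yb | yc | ye | za | zb | zc | ze | acc
  deriving DecidableEq

instance : Fintype St9 :=
  Fintype.ofList [.q0, .qY, .qZ, .ya, .yb, .yc, .ye, .za, .zb, .zc, .ze, .acc]
    (fun x => by cases x <;> simp)

def step9 : St9 → Option (Fin 3) → Option St9 := fun s c =>
  match s with
  | .q0 => if c = some 1 then some .qY else if c = some 2 then some .qZ else none
  | .qY => if c = none then some .ya else none
  | .qZ => if c = none then some .za else none
  | .ya => if c = some 0 then some .yb else if c = none then some .ye else none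
  | .yb => if c = some 0 then some .yc else none
  | .yc => if c = some 0 then some .ya else none
  | .ye => if c = none then some .acc else none
  | .za => if c = some 0 then some .zb else if c = none then some .ze else none
  | .zb => if c = some 0 then some .zc else none
  | .zc => if c = some 0 then some .za else none
  | .ze => if c = none then some .acc else none
  | .acc => none

def tape9 : St9 → Fin 3 := fun s =>
  match s with
  | .q0 | .qY | .qZ | .acc => 0
  | .ya | .zb | .zc | .ze => 1
  | .yb | .yc | .ye | .za => 2

def M₉ : SemiSortedAA (Fin 3) 3 :=
  { State := St9, fintype := inferInstance, start := .q0, accept := {.acc},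
    step := step9, tape := tape9 }

def three (a b c : List (Option (Fin 3))) : Fin 3 → List (Option (Fin 3)) :=
  fun j => if j = 0 then a else if j = 1 then b else c

@[simp] lemma three0 {a b c} : three a b c 0 = a := rfl
@[simp] lemma three1 {a b c} : three a b c 1 = b := rfl
@[simp] lemma three2 {a b c} : three a b c 2 = c := rfl

lemma upd3_0 {a b c x} : Function.update (three a b c) 0 x = three x b c := by
  funext j; rcases fin3 j with h|h|h <;> subst h <;>
    simp [Function.update_apply, three]
lemma upd3_1 {a b c x} : Function.update (three a b c) 1 x = three a x c := by
  funext j; rcases fin3 j with h|h|h <;> subst h <;>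
    simp [Function.update_apply, three]
lemma upd3_2 {a b c x} : Function.update (three a b c) 2 x = three a b x := by
  funext j; rcases fin3 j with h|h|h <;> subst h <;>
    simp [Function.update_apply, three]

lemma three_nil : three [] [] [] = (fun _ => ([] : List (Option (Fin 3)))) := by
  funext j; rcases fin3 j with h|h|h <;> subst h <;> simp

def cont (w : List (Fin 3)) : List (Option (Fin 3)) := w.map some ++ [none]

lemma cont_ne_nil (w : List (Fin 3)) : cont w ≠ [] := by
  cases w <;> simp [cont]

end Part1
section Part1b

open SemiSortedAA

lemma M9_tape (s : St9) : M₉.tape s = tape9 s := rfl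
lemma M9_step (s c) : M₉.step s c = step9 s c := rfl

/-- specialized inversion at a tape-0 state -/
lemma inv9_0 {s : St9} {A B C f} (h : M₉.Run s (three A B C) f) (ht : tape9 s = 0) :
    (s = f ∧ A = [] ∧ B = [] ∧ C = []) ∨
      ∃ c rest t, step9 s c = some t ∧ A = c :: rest ∧
        M₉.Run t (three rest B C) f := by
  rcases run_inv h with ⟨he, hr⟩ | ⟨c, rest, t, hs, hr, hrun⟩
  · exact Or.inl ⟨he, congrFun hr 0, congrFun hr 1, congrFun hr 2⟩
  · rw [M9_tape, ht, three0] at hr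
    rw [M9_tape, ht, upd3_0] at hrun
    exact Or.inr ⟨c, rest, t, hs, hr, hrun⟩

lemma inv9_1 {s : St9} {A B C f} (h : M₉.Run s (three A B C) f) (ht : tape9 s = 1) :
    (s = f ∧ A = [] ∧ B = [] ∧ C = []) ∨
      ∃ c rest t, step9 s c = some t ∧ B = c :: rest ∧
        M₉.Run t (three A rest C) f := by
  rcases run_inv h with ⟨he, hr⟩ | ⟨c, rest, t, hs, hr, hrun⟩
  · exact Or.inl ⟨he, congrFun hr 0, congrFun hr 1, congrFun hr 2⟩
  · rw [M9_tape, ht, three1] at hr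
    rw [M9_tape, ht, upd3_1] at hrun
    exact Or.inr ⟨c, rest, t, hs, hr, hrun⟩

lemma inv9_2 {s : St9} {A B C f} (h : M₉.Run s (three A B C) f) (ht : tape9 s = 2) :
    (s = f ∧ A = [] ∧ B = [] ∧ C = []) ∨
      ∃ c rest t, step9 s c = some t ∧ C = c :: rest ∧
        M₉.Run t (three A B rest) f := by
  rcases run_inv h with ⟨he, hr⟩ | ⟨c, rest, t, hs, hr, hrun⟩
  · exact Or.inl ⟨he, congrFun hr 0, congrFun hr 1, congrFun hr 2⟩
  · rw [M9_tape, ht, three2] at hr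
    rw [M9_tape, ht, upd3_2] at hrun
    exact Or.inr ⟨c, rest, t, hs, hr, hrun⟩

/-- builders -/
lemma bd9_0 {s t : St9} {A B C c rest f} (ht : tape9 s = 0)
    (hs : step9 s c = some t) (hA : A = c :: rest)
    (h : M₉.Run t (three rest B C) f) : M₉.Run s (three A B C) f := by
  subst hA
  refine Run.step (c := c) (rest := rest) hs ?_ ?_
  · rw [M9_tape, ht, three0]
  · rw [M9_tape, ht, upd3_0]; exact h

lemma bd9_1 {s t : St9} {A B C c rest f} (ht : tape9 s = 1)
    (hs : step9 s c = some t) (hB : B = c :: rest)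
    (h : M₉.Run t (three A rest C) f) : M₉.Run s (three A B C) f := by
  subst hB
  refine Run.step (c := c) (rest := rest) hs ?_ ?_
  · rw [M9_tape, ht, three1]
  · rw [M9_tape, ht, upd3_1]; exact h

lemma bd9_2 {s t : St9} {A B C c rest f} (ht : tape9 s = 2)
    (hs : step9 s c = some t) (hC : C = c :: rest)
    (h : M₉.Run t (three A B rest) f) : M₉.Run s (three A B C) f := by
  subst hC
  refine Run.step (c := c) (rest := rest) hs ?_ ?_
  · rw [M9_tape, ht, three2]
  · rw [M9_tape, ht, upd3_2]; exact h

end Part1b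
section Part1c
open SemiSortedAA

lemma cont_rep_succ (m : ℕ) :
    cont (List.replicate (m+1) (0 : Fin 3)) = some 0 :: cont (List.replicate m 0) := by
  simp [cont, List.replicate_succ]

lemma cont_nil_eq : cont ([] : List (Fin 3)) = [none] := rfl

lemma yloop_run : ∀ m : ℕ,
    M₉.Run .ya (three [] (cont (List.replicate m 0)) (cont (List.replicate (2*m) 0))) .acc := by
  intro m
  induction m with
  | zero =>
    refine bd9_1 (t := .ye) rfl (by decide) cont_nil_eq ?_
    refine bd9_2 (t := .acc) rfl (by decide) cont_nil_eq ?_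
    rw [three_nil]; exact Run.nil _
  | succ m ih =>
    have h2 : 2 * (m + 1) = (2 * m + 1) + 1 := by ring
    rw [h2]
    refine bd9_1 (t := .yb) rfl (by decide) (cont_rep_succ m) ?_
    refine bd9_2 (t := .yc) rfl (by decide) (cont_rep_succ (2*m+1)) ?_
    refine bd9_2 (t := .ya) rfl (by decide) (cont_rep_succ (2*m)) ?_
    exact ih

lemma zloop_run : ∀ m : ℕ,
    M₉.Run .za (three [] (cont (List.replicate (2*m) 0)) (cont (List.replicate m 0))) .acc := by
  intro m
  induction m with
  | zero =>
    refine bd9_2 (t := .ze) rfl (by decide) cont_nil_eq ?_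
    refine bd9_1 (t := .acc) rfl (by decide) cont_nil_eq ?_
    rw [three_nil]; exact Run.nil _
  | succ m ih =>
    have h2 : 2 * (m + 1) = (2 * m + 1) + 1 := by ring
    rw [h2]
    refine bd9_2 (t := .zb) rfl (by decide) (cont_rep_succ m) ?_
    refine bd9_1 (t := .zc) rfl (by decide) (cont_rep_succ (2*m+1)) ?_
    refine bd9_1 (t := .za) rfl (by decide) (cont_rep_succ (2*m)) ?_
    exact ih

lemma yloop_fwd : ∀ (w1 : List (Fin 3)), ∀ {w2 : List (Fin 3)} {f : St9},
    M₉.Run .ya (three [] (cont w1) (cont w2)) f →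
    ∃ m, w1 = List.replicate m 0 ∧ w2 = List.replicate (2*m) 0 := by
  intro w1
  induction w1 with
  | nil =>
    intro w2 f h
    rcases inv9_1 h rfl with ⟨_, _, hB, _⟩ | ⟨c, rest, t, hs, hB, hrun⟩
    · exact absurd hB (cont_ne_nil _)
    · simp only [cont, List.map_nil, List.nil_append, List.cons.injEq] at hB
      obtain ⟨hc, hrest⟩ := hB
      subst hc; subst hrest
      simp [step9] at hs
      subst hs
      rcases inv9_2 hrun rfl with ⟨_, _, _, hC⟩ | ⟨c, rest, t, hs, hC, hrun2⟩
      · exact absurd hC (cont_ne_nil _)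
      · cases w2 with
        | nil => exact ⟨0, rfl, rfl⟩
        | cons y w2' =>
          simp only [cont, List.map_cons, List.cons_append, List.cons.injEq] at hC
          obtain ⟨hc, _⟩ := hC
          subst hc
          rcases fin3 y with hy|hy|hy <;> subst hy <;> simp [step9] at hs
  | cons x w1' ih =>
    intro w2 f h
    rcases inv9_1 h rfl with ⟨_, _, hB, _⟩ | ⟨c, rest, t, hs, hB, hrun⟩
    · exact absurd hB (cont_ne_nil _)
    · simp only [cont, List.map_cons, List.cons_append, List.cons.injEq] at hB
      obtain ⟨hc, hrest⟩ := hB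
      subst hc
      rcases fin3 x with hx|hx|hx <;> subst hx <;> simp [step9] at hs <;>
        try subst hs
      subst hrest
      rcases inv9_2 hrun rfl with ⟨_, _, _, hC⟩ | ⟨c, rest, t, hs, hC, hrun2⟩
      · exact absurd hC (cont_ne_nil _)
      · cases w2 with
        | nil =>
          simp only [cont, List.map_nil, List.nil_append, List.cons.injEq] at hC
          obtain ⟨hc, _⟩ := hC; subst hc; simp [step9] at hs
        | cons y w2' =>
          simp only [cont, List.map_cons, List.cons_append, List.cons.injEq] at hC
          obtain ⟨hc, hrest2⟩ := hC
          subst hc; subst hrest2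
          rcases fin3 y with hy|hy|hy <;> subst hy <;> simp [step9] at hs <;>
            try subst hs
          rcases inv9_2 hrun2 rfl with ⟨_, _, _, hC⟩ | ⟨c, rest, t, hs, hC, hrun3⟩
          · exact absurd hC (cont_ne_nil _)
          · cases w2' with
            | nil =>
              simp only [cont, List.map_nil, List.nil_append, List.cons.injEq] at hC
              obtain ⟨hc, _⟩ := hC; subst hc; simp [step9] at hs
            | cons y' w2'' =>
              simp only [cont, List.map_cons, List.cons_append, List.cons.injEq] at hC
              obtain ⟨hc, hrest3⟩ := hC
              subst hc; subst hrest3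
              rcases fin3 y' with hy|hy|hy <;> subst hy <;> simp [step9] at hs <;>
                try subst hs
              obtain ⟨m, hm1, hm2⟩ := ih hrun3
              refine ⟨m + 1, ?_, ?_⟩
              · rw [hm1, List.replicate_succ]
              · rw [hm2]
                have h2 : 2 * (m + 1) = ((2 * m) + 1) + 1 := by ring
                rw [h2, List.replicate_succ, List.replicate_succ]
lemma zloop_fwd : ∀ (w2 : List (Fin 3)), ∀ {w1 : List (Fin 3)} {f : St9},
    M₉.Run .za (three [] (cont w1) (cont w2)) f →
    ∃ m, w1 = List.replicate (2*m) 0 ∧ w2 = List.replicate m 0 := by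
  intro w2
  induction w2 with
  | nil =>
    intro w1 f h
    rcases inv9_2 h rfl with ⟨_, _, _, hC⟩ | ⟨c, rest, t, hs, hC, hrun⟩
    · exact absurd hC (cont_ne_nil _)
    · simp only [cont, List.map_nil, List.nil_append, List.cons.injEq] at hC
      obtain ⟨hc, hrest⟩ := hC
      subst hc; subst hrest
      simp [step9] at hs
      subst hs
      rcases inv9_1 hrun rfl with ⟨_, _, hB, _⟩ | ⟨c, rest, t, hs, hB, hrun2⟩
      · exact absurd hB (cont_ne_nil _)
      · cases w1 with
        | nil => exact ⟨0, rfl, rfl⟩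
        | cons y w1' =>
          simp only [cont, List.map_cons, List.cons_append, List.cons.injEq] at hB
          obtain ⟨hc, _⟩ := hB
          subst hc
          rcases fin3 y with hy|hy|hy <;> subst hy <;> simp [step9] at hs
  | cons x w2' ih =>
    intro w1 f h
    rcases inv9_2 h rfl with ⟨_, _, _, hC⟩ | ⟨c, rest, t, hs, hC, hrun⟩
    · exact absurd hC (cont_ne_nil _)
    · simp only [cont, List.map_cons, List.cons_append, List.cons.injEq] at hC
      obtain ⟨hc, hrest⟩ := hC
      subst hc
      rcases fin3 x with hx|hx|hx <;> subst hx <;> simp [step9] at hs <;>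
        try subst hs
      subst hrest
      rcases inv9_1 hrun rfl with ⟨_, _, hB, _⟩ | ⟨c, rest, t, hs, hB, hrun2⟩
      · exact absurd hB (cont_ne_nil _)
      · cases w1 with
        | nil =>
          simp only [cont, List.map_nil, List.nil_append, List.cons.injEq] at hB
          obtain ⟨hc, _⟩ := hB; subst hc; simp [step9] at hs
        | cons y w1' =>
          simp only [cont, List.map_cons, List.cons_append, List.cons.injEq] at hB
          obtain ⟨hc, hrest2⟩ := hB
          subst hc; subst hrest2
          rcases fin3 y with hy|hy|hy <;> subst hy <;> simp [step9] at hs <;>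
            try subst hs
          rcases inv9_1 hrun2 rfl with ⟨_, _, hB, _⟩ | ⟨c, rest, t, hs, hB, hrun3⟩
          · exact absurd hB (cont_ne_nil _)
          · cases w1' with
            | nil =>
              simp only [cont, List.map_nil, List.nil_append, List.cons.injEq] at hB
              obtain ⟨hc, _⟩ := hB; subst hc; simp [step9] at hs
            | cons y' w1'' =>
              simp only [cont, List.map_cons, List.cons_append, List.cons.injEq] at hB
              obtain ⟨hc, hrest3⟩ := hB
              subst hc; subst hrest3
              rcases fin3 y' with hy|hy|hy <;> subst hy <;> simp [step9] at hs <;>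
                try subst hs
              obtain ⟨m, hm1, hm2⟩ := ih hrun3
              refine ⟨m + 1, ?_, ?_⟩
              · rw [hm1]
                have h2 : 2 * (m + 1) = ((2 * m) + 1) + 1 := by ring
                rw [h2, List.replicate_succ, List.replicate_succ]
              · rw [hm2, List.replicate_succ]

lemma fun3_eq (g : Fin 3 → List (Option (Fin 3))) : g = three (g 0) (g 1) (g 2) := by
  funext j; rcases fin3 j with h|h|h <;> subst h <;> simp [three]

lemma part1 : IsQuasiRegular L₉ := by
  refine ⟨M₉, fun w => ?_⟩
  constructor
  · rintro (⟨m, h0, h1, h2⟩ | ⟨m, h0, h1, h2⟩)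
    · refine ⟨.acc, rfl, ?_⟩
      rw [show (fun i => (w i).map some ++ [none]) = three (cont (w 0)) (cont (w 1)) (cont (w 2)) from fun3_eq _]
      rw [h0, h1, h2]
      refine bd9_0 (t := .qY) rfl (by decide) (show cont [1] = some 1 :: cont [] from rfl) ?_
      refine bd9_0 (t := .ya) rfl (by decide) cont_nil_eq ?_
      exact yloop_run m
    · refine ⟨.acc, rfl, ?_⟩
      rw [show (fun i => (w i).map some ++ [none]) = three (cont (w 0)) (cont (w 1)) (cont (w 2)) from fun3_eq _]
      rw [h0, h1, h2]
      refine bd9_0 (t := .qZ) rfl (by decide) (show cont [2] = some 2 :: cont [] from rfl) ?_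
      refine bd9_0 (t := .za) rfl (by decide) cont_nil_eq ?_
      exact zloop_run m
  · rintro ⟨f, hf, hrun⟩
    rw [show (fun i => (w i).map some ++ [none]) = three (cont (w 0)) (cont (w 1)) (cont (w 2)) from fun3_eq _] at hrun
    replace hrun : M₉.Run St9.q0 (three (cont (w 0)) (cont (w 1)) (cont (w 2))) f := hrun
    rcases inv9_0 hrun rfl with ⟨_, h0, _, _⟩ | ⟨c, rest, t, hs, h0, hrun1⟩
    · exact absurd h0 (cont_ne_nil _)
    · rcases hw0 : w 0 with _ | ⟨x, w0'⟩
      · rw [hw0] at h0; simp [cont] at h0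
        obtain ⟨hc, _⟩ := h0; subst hc; simp [step9] at hs
      · rw [hw0] at h0
        simp only [cont, List.map_cons, List.cons_append, List.cons.injEq] at h0
        obtain ⟨hc, hrest⟩ := h0
        subst hc
        rcases fin3 x with hx|hx|hx <;> subst hx <;> simp [step9] at hs <;>
          try subst hs
        · -- x = 1 : Y branch
          subst hrest
          rcases inv9_0 hrun1 rfl with ⟨_, h0, _, _⟩ | ⟨c, rest, t, hs, h0, hrun2⟩
          · exact absurd h0 (cont_ne_nil _)
          · rcases hw0' : w0' with _ | ⟨x', w0''⟩
            · rw [hw0'] at h0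
              simp only [cont, List.map_nil, List.nil_append, List.cons.injEq] at h0
              obtain ⟨hc, hrest2⟩ := h0
              subst hc; subst hrest2
              simp [step9] at hs
              subst hs
              obtain ⟨m, hm1, hm2⟩ := yloop_fwd (w 1) hrun2
              exact Or.inl ⟨m, by rw [hw0, hw0'], hm1, hm2⟩
            · rw [hw0'] at h0
              simp only [cont, List.map_cons, List.cons_append, List.cons.injEq] at h0
              obtain ⟨hc, _⟩ := h0
              subst hc
              rcases fin3 x' with hx|hx|hx <;> subst hx <;> simp [step9] at hs
        · -- x = 2 : Z branch
          subst hrest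
          rcases inv9_0 hrun1 rfl with ⟨_, h0, _, _⟩ | ⟨c, rest, t, hs, h0, hrun2⟩
          · exact absurd h0 (cont_ne_nil _)
          · rcases hw0' : w0' with _ | ⟨x', w0''⟩
            · rw [hw0'] at h0
              simp only [cont, List.map_nil, List.nil_append, List.cons.injEq] at h0
              obtain ⟨hc, hrest2⟩ := h0
              subst hc; subst hrest2
              simp [step9] at hs
              subst hs
              obtain ⟨m, hm1, hm2⟩ := zloop_fwd (w 2) hrun2
              exact Or.inr ⟨m, by rw [hw0, hw0'], hm1, hm2⟩
            · rw [hw0'] at h0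
              simp only [cont, List.map_cons, List.cons_append, List.cons.injEq] at h0
              obtain ⟨hc, _⟩ := h0
              subst hc
              rcases fin3 x' with hx|hx|hx <;> subst hx <;> simp [step9] at hs
section Part2

lemma cons_one' (a : List (Fin 3)) (v : Fin 2 → List (Fin 3)) :
    (Fin.cons a v : Fin 3 → List (Fin 3)) 1 = v 0 := by
  rw [show (1 : Fin 3) = Fin.succ 0 from rfl, Fin.cons_succ]
lemma cons_two' (a : List (Fin 3)) (v : Fin 2 → List (Fin 3)) :
    (Fin.cons a v : Fin 3 → List (Fin 3)) 2 = v 1 := by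
  rw [show (2 : Fin 3) = Fin.succ 1 from rfl, Fin.cons_succ]

lemma part2 : proj₉ =
    ({ v : Fin 2 → List (Fin 3) |
        ∃ m : ℕ, v 0 = List.replicate m 0 ∧ v 1 = List.replicate (2 * m) 0 } ∪
      { v : Fin 2 → List (Fin 3) |
        ∃ m : ℕ, v 0 = List.replicate (2 * m) 0 ∧ v 1 = List.replicate m 0 }) := by
  ext v
  constructor
  · rintro ⟨a, (⟨m, _, h1, h2⟩ | ⟨m, _, h1, h2⟩)⟩
    · rw [cons_one'] at h1; rw [cons_two'] at h2
      exact Or.inl ⟨m, h1, h2⟩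
    · rw [cons_one'] at h1; rw [cons_two'] at h2
      exact Or.inr ⟨m, h1, h2⟩
  · rintro (⟨m, h1, h2⟩ | ⟨m, h1, h2⟩)
    · exact ⟨[1], Or.inl ⟨m, Fin.cons_zero _ _, by rw [cons_one']; exact h1, by rw [cons_two']; exact h2⟩⟩
    · exact ⟨[2], Or.inr ⟨m, Fin.cons_zero _ _, by rw [cons_one']; exact h1, by rw [cons_two']; exact h2⟩⟩

end Part2
section Part3
open SemiSortedAA

def cnt (r : ℕ) : List (Option (Fin 3)) := List.replicate r (some 0) ++ [none]

def two (l0 l1 : List (Option (Fin 3))) : Fin 2 → List (Option (Fin 3)) :=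
  fun j => if j = 0 then l0 else l1

@[simp] lemma two0 {l0 l1} : two l0 l1 0 = l0 := rfl
@[simp] lemma two1 {l0 l1} : two l0 l1 1 = l1 := rfl

lemma upd2_0 {l0 l1 x} : Function.update (two l0 l1) 0 x = two x l1 := by
  funext j; rcases fin2 j with h|h <;> subst h <;>
    simp [Function.update_apply, two]
lemma upd2_1 {l0 l1 x} : Function.update (two l0 l1) 1 x = two l0 x := by
  funext j; rcases fin2 j with h|h <;> subst h <;>
    simp [Function.update_apply, two]

lemma two_nil : two [] [] = (fun _ => ([] : List (Option (Fin 3)))) := by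
  funext j; rcases fin2 j with h|h <;> subst h <;> simp

lemma cnt_ne_nil (r : ℕ) : cnt r ≠ [] := by cases r <;> simp [cnt]

lemma cnt_zero : cnt 0 = [none] := rfl
lemma cnt_succ (r : ℕ) : cnt (r+1) = some 0 :: cnt r := by
  simp [cnt, List.replicate_succ]

variable {M : SemiSortedAA (Fin 3) 2}

lemma run_nil_inv {s f : M.State} (h : M.Run s (fun _ => []) f) : s = f := by
  rcases run_inv h with ⟨he, _⟩ | ⟨c, rest, t, _, hr, _⟩
  · exact he
  · exact absurd hr (by simp)

/-- run on a single tape `i` with `r` zeros then `$`, ending in `f` right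
after reading the `$`. -/
def U (M : SemiSortedAA (Fin 3) 2) (i : Fin 2) : M.State → ℕ → M.State → Prop
  | s, 0, f => M.tape s = i ∧ M.step s none = some f
  | s, r+1, f => M.tape s = i ∧ ∃ t, M.step s (some 0) = some t ∧ U M i t r f

lemma U_tape {i : Fin 2} {s r f} (h : U M i s r f) : M.tape s = i := by
  cases r <;> exact h.1

lemma run_of_U0 : ∀ {r : ℕ} {s f : M.State}, U M 0 s r f → M.Run s (two (cnt r) []) f := by
  intro r
  induction r with
  | zero =>
    rintro s f ⟨ht, hs⟩
    refine Run.step (c := none) (rest := []) hs ?_ ?_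
    · rw [ht, two0, cnt_zero]
    · rw [ht, upd2_0, two_nil]; exact Run.nil _
  | succ r ih =>
    rintro s f ⟨ht, t, hs, hU⟩
    refine Run.step (c := some 0) (rest := cnt r) hs ?_ ?_
    · rw [ht, two0, cnt_succ]
    · rw [ht, upd2_0]; exact ih hU

lemma run_of_U1 : ∀ {r : ℕ} {s f : M.State}, U M 1 s r f → M.Run s (two [] (cnt r)) f := by
  intro r
  induction r with
  | zero =>
    rintro s f ⟨ht, hs⟩
    refine Run.step (c := none) (rest := []) hs ?_ ?_
    · rw [ht, two1, cnt_zero]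
    · rw [ht, upd2_1, two_nil]; exact Run.nil _
  | succ r ih =>
    rintro s f ⟨ht, t, hs, hU⟩
    refine Run.step (c := some 0) (rest := cnt r) hs ?_ ?_
    · rw [ht, two1, cnt_succ]
    · rw [ht, upd2_1]; exact ih hU

lemma U0_of_run : ∀ {r : ℕ} {s f : M.State}, M.Run s (two (cnt r) []) f → U M 0 s r f := by
  intro r
  induction r with
  | zero =>
    intro s f h
    rcases run_inv h with ⟨he, hr⟩ | ⟨c, rest, t, hs, hr, hrun⟩
    · exact absurd (congrFun hr 0) (cnt_ne_nil 0)
    · rcases fin2 (M.tape s) with ht | ht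
      · rw [ht, two0, cnt_zero] at hr
        obtain ⟨hc, hrest⟩ := List.cons.inj hr
        subst hc; subst hrest
        rw [ht, upd2_0, two_nil] at hrun
        exact ⟨ht, (run_nil_inv hrun) ▸ hs⟩
      · rw [ht, two1] at hr; exact absurd hr (by simp)
  | succ r ih =>
    intro s f h
    rcases run_inv h with ⟨he, hr⟩ | ⟨c, rest, t, hs, hr, hrun⟩
    · exact absurd (congrFun hr 0) (cnt_ne_nil _)
    · rcases fin2 (M.tape s) with ht | ht
      · rw [ht, two0, cnt_succ] at hr
        obtain ⟨hc, hrest⟩ := List.cons.inj hr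
        subst hc; subst hrest
        rw [ht, upd2_0] at hrun
        exact ⟨ht, t, hs, ih hrun⟩
      · rw [ht, two1] at hr; exact absurd hr (by simp)

lemma U1_of_run : ∀ {r : ℕ} {s f : M.State}, M.Run s (two [] (cnt r)) f → U M 1 s r f := by
  intro r
  induction r with
  | zero =>
    intro s f h
    rcases run_inv h with ⟨he, hr⟩ | ⟨c, rest, t, hs, hr, hrun⟩
    · exact absurd (congrFun hr 1) (cnt_ne_nil 0)
    · rcases fin2 (M.tape s) with ht | ht
      · rw [ht, two0] at hr; exact absurd hr (by simp)
      · rw [ht, two1, cnt_zero] at hr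
        obtain ⟨hc, hrest⟩ := List.cons.inj hr
        subst hc; subst hrest
        rw [ht, upd2_1, two_nil] at hrun
        exact ⟨ht, (run_nil_inv hrun) ▸ hs⟩
  | succ r ih =>
    intro s f h
    rcases run_inv h with ⟨he, hr⟩ | ⟨c, rest, t, hs, hr, hrun⟩
    · exact absurd (congrFun hr 1) (cnt_ne_nil _)
    · rcases fin2 (M.tape s) with ht | ht
      · rw [ht, two0] at hr; exact absurd hr (by simp)
      · rw [ht, two1, cnt_succ] at hr
        obtain ⟨hc, hrest⟩ := List.cons.inj hr
        subst hc; subst hrest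
        rw [ht, upd2_1] at hrun
        exact ⟨ht, t, hs, ih hrun⟩

/-! ### the universal deterministic path -/

def path (M : SemiSortedAA (Fin 3) 2) : ℕ → Option (M.State × ℕ × ℕ)
  | 0 => some (M.start, 0, 0)
  | k+1 => (path M k).bind fun x =>
      (M.step x.1 (some 0)).map fun t =>
        if M.tape x.1 = 0 then (t, x.2.1 + 1, x.2.2) else (t, x.2.1, x.2.2 + 1)

lemma path_succ_inv {k : ℕ} {y} (h : path M (k+1) = some y) :
    ∃ s a b t, path M k = some (s, a, b) ∧ M.step s (some 0) = some t ∧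
      y = if M.tape s = 0 then (t, a+1, b) else (t, a, b+1) := by
  rw [path] at h
  cases hp : path M k with
  | none => rw [hp] at h; simp at h
  | some x =>
    obtain ⟨s, a, b⟩ := x
    rw [hp] at h
    simp only [Option.bind_some] at h
    cases hs : M.step (s, a, b).1 (some 0) with
    | none => rw [hs] at h; simp at h
    | some t =>
      rw [hs] at h; simp only [Option.map_some, Option.some.injEq] at h
      exact ⟨s, a, b, t, rfl, hs, h.symm⟩

lemma path_le {j : ℕ} : ∀ {k : ℕ}, j ≤ k → ∀ {y}, path M k = some y →
    ∃ z, path M j = some z := by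
  intro k
  induction k with
  | zero => intro hjk y h; exact ⟨y, (Nat.le_zero.mp hjk) ▸ h⟩
  | succ k ih =>
    intro hjk y h
    rcases Nat.eq_or_lt_of_le hjk with he | hlt
    · exact ⟨y, he ▸ h⟩
    · obtain ⟨s, a, b, t, hp, _, _⟩ := path_succ_inv h
      exact ih (Nat.lt_succ_iff.mp hlt) hp

lemma path_sum : ∀ {k : ℕ} {s : M.State} {a b : ℕ},
    path M k = some (s, a, b) → a + b = k := by
  intro k
  induction k with
  | zero =>
    intro s a b h
    rw [path] at h
    simp only [Option.some.injEq, Prod.mk.injEq] at h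
    omega
  | succ k ih =>
    intro s a b h
    obtain ⟨s0, a0, b0, t, hp, hs, he⟩ := path_succ_inv h
    have := ih hp
    split at he <;> (simp only [Prod.mk.injEq] at he; omega)

lemma path_mono : ∀ (d : ℕ) {k : ℕ} {s a b s' a' b' : _},
    path M k = some (s, a, b) → path M (k+d) = some (s', a', b') →
    a ≤ a' ∧ b ≤ b' := by
  intro d
  induction d with
  | zero =>
    intro k s a b s' a' b' h h'
    rw [Nat.add_zero, h] at h'
    simp only [Option.some.injEq, Prod.mk.injEq] at h'
    omega
  | succ d ih =>
    intro k s a b s' a' b' h h'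
    rw [show k + (d+1) = (k+d) + 1 from rfl] at h'
    obtain ⟨s1, a1, b1, t, hp, hs, he⟩ := path_succ_inv h'
    have := ih h hp
    split at he <;> (simp only [Prod.mk.injEq] at he; omega)

lemma path_strict0 {j j' : ℕ} {s1 a b1 s2 a2 b2}
    (h : path M j = some (s1, a, b1)) (ht : M.tape s1 = 0)
    (h' : path M j' = some (s2, a2, b2)) (hjj : j < j') : a < a2 := by
  have h1 : j + 1 ≤ j' := hjj
  obtain ⟨z, hz⟩ := path_le h1 h'
  obtain ⟨s0, a0, b0, t, hp, hs, he⟩ := path_succ_inv hz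
  rw [h] at hp
  simp only [Option.some.injEq, Prod.mk.injEq] at hp
  obtain ⟨hs0, ha0, hb0⟩ := hp
  subst hs0; subst ha0; subst hb0
  rw [if_pos ht] at he
  subst he
  obtain ⟨d, hd⟩ := Nat.exists_eq_add_of_le h1
  rw [hd] at h'
  have := path_mono d hz h'
  omega

lemma path_uniq0 {j j' : ℕ} {s1 a b1 s2 b2}
    (h : path M j = some (s1, a, b1)) (ht : M.tape s1 = 0)
    (h' : path M j' = some (s2, a, b2)) (ht' : M.tape s2 = 0) :
    s1 = s2 ∧ b1 = b2 := by
  have hjj : j = j' := by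
    rcases Nat.lt_trichotomy j j' with hlt | he | hgt
    · exact absurd (path_strict0 h ht h' hlt) (lt_irrefl a)
    · exact he
    · exact absurd (path_strict0 h' ht' h hgt) (lt_irrefl a)
  subst hjj
  rw [h] at h'
  simp only [Option.some.injEq, Prod.mk.injEq] at h'
  exact ⟨h'.1, h'.2.2⟩

lemma path_cross0 : ∀ {k : ℕ} {s : M.State} {a b : ℕ},
    path M k = some (s, a, b) → ∀ m, m < a →
    ∃ j s' b', path M j = some (s', m, b') ∧ M.tape s' = 0 ∧ b' ≤ b := by
  intro k
  induction k with
  | zero =>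
    intro s a b h m hm
    rw [path] at h
    simp only [Option.some.injEq, Prod.mk.injEq] at h
    omega
  | succ k ih =>
    intro s a b h m hm
    obtain ⟨s0, a0, b0, t, hp, hs, he⟩ := path_succ_inv h
    by_cases ht : M.tape s0 = 0
    · rw [if_pos ht] at he
      simp only [Prod.mk.injEq] at he
      obtain ⟨hts, ha, hb⟩ := he
      rcases Nat.lt_or_ge m a0 with hlt | hge
      · obtain ⟨j, s', b', h1, h2, h3⟩ := ih hp m hlt
        exact ⟨j, s', b', h1, h2, by omega⟩
      · have hma : m = a0 := by omega
        exact ⟨k, s0, b0, hma ▸ hp, ht, by omega⟩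
    · rw [if_neg ht] at he
      simp only [Prod.mk.injEq] at he
      obtain ⟨hts, ha, hb⟩ := he
      obtain ⟨j, s', b', h1, h2, h3⟩ := ih hp m (by omega)
      exact ⟨j, s', b', h1, h2, by omega⟩

/-- rebuilding a run of the full input from a run at a path point -/
lemma path_build : ∀ {k : ℕ} {s : M.State} {a b p q : ℕ} {f},
    path M k = some (s, a, b) → M.Run s (two (cnt p) (cnt q)) f →
    M.Run M.start (two (cnt (a + p)) (cnt (b + q))) f := by
  intro k
  induction k with
  | zero =>
    intro s a b p q f h hr
    rw [path] at h
    simp only [Option.some.injEq, Prod.mk.injEq] at h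
    obtain ⟨h1, h2, h3⟩ := h
    subst h1; subst h2; subst h3
    simpa using hr
  | succ k ih =>
    intro s a b p q f h hr
    obtain ⟨s0, a0, b0, t, hp, hs, he⟩ := path_succ_inv h
    by_cases ht : M.tape s0 = 0
    · rw [if_pos ht] at he
      simp only [Prod.mk.injEq] at he
      obtain ⟨hts, ha, hb⟩ := he
      subst hts
      have hr' : M.Run s0 (two (cnt (p+1)) (cnt q)) f := by
        refine Run.step (c := some 0) (rest := cnt p) hs ?_ ?_
        · rw [ht, two0, cnt_succ]
        · rw [ht, upd2_0]; exact hr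
      have := ih hp hr'
      have harith : a0 + (p + 1) = a + p := by omega
      have harith2 : b0 + q = b + q := by omega
      rw [harith, harith2] at this
      exact this
    · rw [if_neg ht] at he
      simp only [Prod.mk.injEq] at he
      obtain ⟨hts, ha, hb⟩ := he
      subst hts
      have ht1 : M.tape s0 = 1 := by
        rcases fin2 (M.tape s0) with h1 | h1
        · exact absurd h1 ht
        · exact h1
      have hr' : M.Run s0 (two (cnt p) (cnt (q+1))) f := by
        refine Run.step (c := some 0) (rest := cnt q) hs ?_ ?_
        · rw [ht1, two1, cnt_succ]
        · rw [ht1, upd2_1]; exact hr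
      have := ih hp hr'
      have harith : b0 + (q + 1) = b + q := by omega
      have harith2 : a0 + p = a + p := by omega
      rw [harith, harith2] at this
      exact this

end Part3
section Part3b
open SemiSortedAA

variable {M : SemiSortedAA (Fin 3) 2}

/-- the exit lemma: any full run decomposes along the universal path -/
lemma path_exit : ∀ (n p q : ℕ), p + q < n → ∀ {s : M.State} {f k a b},
    path M k = some (s, a, b) → M.Run s (two (cnt p) (cnt q)) f →
    ∃ k' s' a' b', path M k' = some (s', a', b') ∧
      ((M.tape s' = 0 ∧ a' = a + p ∧ b ≤ b' ∧ b' ≤ b + q ∧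
          ∃ u, M.step s' none = some u ∧ U M 1 u (b + q - b') f) ∨
       (M.tape s' = 1 ∧ b' = b + q ∧ a ≤ a' ∧ a' ≤ a + p ∧
          ∃ u, M.step s' none = some u ∧ U M 0 u (a + p - a') f)) := by
  intro n
  induction n with
  | zero => intro p q h; omega
  | succ n ih =>
    intro p q hpq s f k a b hk hr
    rcases run_inv hr with ⟨he, hc⟩ | ⟨c, rest, t, hs, hc, hrun⟩
    · exact absurd (congrFun hc 0) (cnt_ne_nil _)
    · rcases fin2 (M.tape s) with ht | ht
      · rw [ht, two0] at hc
        rw [ht, upd2_0] at hrun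
        cases p with
        | zero =>
          rw [cnt_zero] at hc
          obtain ⟨hcn, hrest⟩ := List.cons.inj hc
          subst hcn; subst hrest
          refine ⟨k, s, a, b, hk, Or.inl ⟨ht, by omega, le_refl b, by omega, t, hs, ?_⟩⟩
          have : b + q - b = q := by omega
          rw [this]
          exact U1_of_run hrun
        | succ p' =>
          rw [cnt_succ] at hc
          obtain ⟨hcn, hrest⟩ := List.cons.inj hc
          subst hcn; subst hrest
          have hk' : path M (k+1) = some (t, a+1, b) := by
            rw [path, hk]
            simp only [Option.bind_some, hs, Option.map_some]
            rw [if_pos ht]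
          obtain ⟨k', s', a', b', h1, h2⟩ := ih p' q (by omega) hk' hrun
          refine ⟨k', s', a', b', h1, ?_⟩
          rcases h2 with ⟨m1, m2, m3, m4, u, m5, m6⟩ | ⟨m1, m2, m3, m4, u, m5, m6⟩
          · exact Or.inl ⟨m1, by omega, by omega, by omega, u, m5, m6⟩
          · refine Or.inr ⟨m1, m2, by omega, by omega, u, m5, ?_⟩
            have : a + 1 + p' - a' = a + (p' + 1) - a' := by omega
            rw [← this]; exact m6
      · rw [ht, two1] at hc
        rw [ht, upd2_1] at hrun
        cases q with
        | zero =>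
          rw [cnt_zero] at hc
          obtain ⟨hcn, hrest⟩ := List.cons.inj hc
          subst hcn; subst hrest
          refine ⟨k, s, a, b, hk, Or.inr ⟨ht, by omega, le_refl a, by omega, t, hs, ?_⟩⟩
          have : a + p - a = p := by omega
          rw [this]
          exact U0_of_run hrun
        | succ q' =>
          rw [cnt_succ] at hc
          obtain ⟨hcn, hrest⟩ := List.cons.inj hc
          subst hcn; subst hrest
          have hk' : path M (k+1) = some (t, a, b+1) := by
            rw [path, hk]
            simp only [Option.bind_some, hs, Option.map_some]
            rw [if_neg (by rw [ht]; exact one_ne_zero)]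
          obtain ⟨k', s', a', b', h1, h2⟩ := ih p q' (by omega) hk' hrun
          refine ⟨k', s', a', b', h1, ?_⟩
          rcases h2 with ⟨m1, m2, m3, m4, u, m5, m6⟩ | ⟨m1, m2, m3, m4, u, m5, m6⟩
          · refine Or.inl ⟨m1, m2, by omega, by omega, u, m5, ?_⟩
            have : b + 1 + q' - b' = b + (q' + 1) - b' := by omega
            rw [← this]; exact m6
          · exact Or.inr ⟨m1, by omega, by omega, by omega, u, m5, m6⟩

end Part3b
section Part3c
open SemiSortedAA

variable {M : SemiSortedAA (Fin 3) 2}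

def gstep (M : SemiSortedAA (Fin 3) 2) : Option M.State → Option M.State :=
  fun o => o.bind fun u => M.step u (some 0)

lemma gstep_none (k : ℕ) : (gstep M)^[k] none = none := by
  induction k with
  | zero => rfl
  | succ k ih => rw [Function.iterate_succ_apply, show gstep M none = none from rfl, ih]

lemma U_chain {i : Fin 2} : ∀ (k : ℕ) {s : M.State} {r f}, U M i s r f → k ≤ r →
    ∃ t, (gstep M)^[k] (some s) = some t ∧ U M i t (r - k) f := by
  intro k
  induction k with
  | zero => intro s r f h _; exact ⟨s, rfl, by rw [Nat.sub_zero]; exact h⟩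
  | succ k ih =>
    intro s r f h hk
    cases r with
    | zero => omega
    | succ r =>
      obtain ⟨ht, t1, hs1, hU1⟩ := h
      obtain ⟨t, hgt, hUt⟩ := ih hU1 (by omega)
      refine ⟨t, ?_, ?_⟩
      · rw [Function.iterate_succ_apply,
          show gstep M (some s) = M.step s (some 0) from rfl, hs1]
        exact hgt
      · have harith : r + 1 - (k + 1) = r - k := by omega
        rw [harith]; exact hUt

lemma U_glue {i : Fin 2} : ∀ (k : ℕ) {s t : M.State} {r f},
    (gstep M)^[k] (some s) = some t →
    (∀ j, j < k → ∃ u, (gstep M)^[j] (some s) = some u ∧ M.tape u = i) →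
    U M i t r f → U M i s (k + r) f := by
  intro k
  induction k with
  | zero =>
    intro s t r f hg _ hU
    rw [Nat.zero_add]
    exact (Option.some.inj hg) ▸ hU
  | succ k ih =>
    intro s t r f hg hch hU
    obtain ⟨u0, hu0, htu0⟩ := hch 0 (Nat.succ_pos k)
    rw [Function.iterate_zero_apply, Option.some.injEq] at hu0
    subst hu0
    cases hs0 : M.step s (some 0) with
    | none =>
      rw [Function.iterate_succ_apply,
        show gstep M (some s) = M.step s (some 0) from rfl, hs0, gstep_none] at hg
      exact absurd hg (by simp)
    | some u1 =>
      rw [Function.iterate_succ_apply,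
        show gstep M (some s) = M.step s (some 0) from rfl, hs0] at hg
      have hch1 : ∀ j, j < k → ∃ u, (gstep M)^[j] (some u1) = some u ∧ M.tape u = i := by
        intro j hj
        obtain ⟨u, hu, htu⟩ := hch (j+1) (by omega)
        refine ⟨u, ?_, htu⟩
        rw [Function.iterate_succ_apply,
          show gstep M (some s) = M.step s (some 0) from rfl, hs0] at hu
        exact hu
      have hind := ih hg hch1 hU
      have harith : k + 1 + r = (k + r) + 1 := by omega
      rw [harith]
      exact ⟨htu0, u1, hs0, hind⟩

lemma U_pump {i : Fin 2} {s : M.State} {r f}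
    (hU : U M i s r f) (hK : @Fintype.card M.State M.fintype ≤ r) :
    ∃ π, 1 ≤ π ∧ U M i s (r + π) f := by
  letI := M.fintype
  set K := Fintype.card M.State with hKdef
  have hchain : ∀ k : Fin (K + 1), ∃ t, (gstep M)^[(k : ℕ)] (some s) = some t ∧
      U M i t (r - (k : ℕ)) f := fun k => U_chain k hU (by have := k.isLt; omega)
  set F : Fin (K + 1) → M.State := fun k => (hchain k).choose with hF
  have hspec : ∀ k : Fin (K + 1), (gstep M)^[(k : ℕ)] (some s) = some (F k) ∧
      U M i (F k) (r - (k : ℕ)) f := fun k => (hchain k).choose_spec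
  have hcard : Fintype.card M.State < Fintype.card (Fin (K + 1)) := by
    simp [hKdef]
  obtain ⟨k1, k2, hne, heq⟩ := Fintype.exists_ne_map_eq_of_card_lt F hcard
  have main : ∀ k1 k2 : Fin (K + 1), (k1 : ℕ) < (k2 : ℕ) → F k1 = F k2 →
      ∃ π, 1 ≤ π ∧ U M i s (r + π) f := by
    intro k1 k2 hlt heq
    set π := (k2 : ℕ) - (k1 : ℕ) with hπ
    have hπ1 : 1 ≤ π := by omega
    -- the cycle
    have hcyc : (gstep M)^[π] (some (F k1)) = some (F k1) := by
      have h1 : (gstep M)^[π + (k1 : ℕ)] (some s) = some (F k2) := by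
        rw [show π + (k1 : ℕ) = (k2 : ℕ) from by omega]
        exact (hspec k2).1
      rw [Function.iterate_add_apply, (hspec k1).1] at h1
      rw [h1, heq]
    -- chain inside the cycle
    have hchcyc : ∀ j, j < π → ∃ u, (gstep M)^[j] (some (F k1)) = some u ∧
        M.tape u = i := by
      intro j hj
      have hk : j + (k1 : ℕ) ≤ K := by omega
      have h1 : (gstep M)^[j + (k1 : ℕ)] (some s) = some (F ⟨j + (k1 : ℕ), by omega⟩) :=
        (hspec ⟨j + (k1 : ℕ), by omega⟩).1
      rw [Function.iterate_add_apply, (hspec k1).1] at h1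
      exact ⟨F ⟨j + (k1 : ℕ), by omega⟩, h1, U_tape (hspec ⟨j + (k1 : ℕ), by omega⟩).2⟩
    have hmid : U M i (F k1) (π + (r - (k1 : ℕ))) f :=
      U_glue π hcyc hchcyc (hspec k1).2
    -- outer chain
    have hchout : ∀ j, j < (k1 : ℕ) → ∃ u, (gstep M)^[j] (some s) = some u ∧
        M.tape u = i := by
      intro j hj
      exact ⟨F ⟨j, by omega⟩, (hspec ⟨j, by omega⟩).1,
        U_tape (hspec ⟨j, by omega⟩).2⟩
    have hout : U M i s ((k1 : ℕ) + (π + (r - (k1 : ℕ)))) f :=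
      U_glue (k1 : ℕ) (hspec k1).1 hchout hmid
    have harith : (k1 : ℕ) + (π + (r - (k1 : ℕ))) = r + π := by
      have : (k1 : ℕ) ≤ K := by omega
      omega
    rw [harith] at hout
    exact ⟨π, hπ1, hout⟩
  rcases (show (k1 : ℕ) ≠ (k2 : ℕ) from fun hc => hne (Fin.ext hc)).lt_or_gt with hlt | hlt
  · exact main k1 k2 hlt heq
  · exact main k2 k1 hlt heq.symm

end Part3c
section Part3d
open SemiSortedAA

variable {M : SemiSortedAA (Fin 3) 2}

lemma acc_build0 {k : ℕ} {s : M.State} {a b R : ℕ} {u f}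
    (hp : path M k = some (s, a, b)) (ht : M.tape s = 0)
    (hu : M.step s none = some u) (hU : U M 1 u R f) :
    M.Run M.start (two (cnt a) (cnt (b + R))) f := by
  have r1 : M.Run u (two [] (cnt R)) f := run_of_U1 hU
  have r0 : M.Run s (two (cnt 0) (cnt R)) f := by
    refine Run.step (c := none) (rest := []) hu ?_ ?_
    · rw [ht, two0, cnt_zero]
    · rw [ht, upd2_0]; exact r1
  have := path_build hp r0
  rwa [Nat.add_zero] at this

lemma acc_build1 {k : ℕ} {s : M.State} {a b R : ℕ} {u f}
    (hp : path M k = some (s, a, b)) (ht : M.tape s = 1)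
    (hu : M.step s none = some u) (hU : U M 0 u R f) :
    M.Run M.start (two (cnt (a + R)) (cnt b)) f := by
  have r1 : M.Run u (two (cnt R) []) f := run_of_U0 hU
  have r0 : M.Run s (two (cnt R) (cnt 0)) f := by
    refine Run.step (c := none) (rest := []) hu ?_ ?_
    · rw [ht, two1, cnt_zero]
    · rw [ht, upd2_1]; exact r1
  have := path_build hp r0
  rwa [Nat.add_zero] at this

lemma accepts_iff {p q : ℕ} :
    M.Accepts ![List.replicate p 0, List.replicate q 0] ↔
      ∃ f ∈ M.accept, M.Run M.start (two (cnt p) (cnt q)) f := by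
  have hc : (fun i => ((![List.replicate p (0 : Fin 3), List.replicate q 0]) i).map some
      ++ [none]) = two (cnt p) (cnt q) := by
    funext i
    rcases fin2 i with h | h <;> subst h <;>
      simp [two, cnt, List.map_replicate]
  unfold SemiSortedAA.Accepts
  rw [hc]

lemma rep_len {p q : ℕ} (h : List.replicate p (0 : Fin 3) = List.replicate q 0) :
    p = q := by
  have := congrArg List.length h
  simpa using this

lemma part3 : ¬ IsQuasiRegular proj₉ := by
  rintro ⟨M, hM⟩
  letI := M.fintype
  set K := Fintype.card M.State with hK
  set m := K + 1 with hm
  have hM' : ∀ p q : ℕ,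
      M.Accepts ![List.replicate p 0, List.replicate q 0] ↔ (q = 2*p ∨ p = 2*q) := by
    intro p q
    rw [← hM, part2]
    constructor
    · rintro (⟨j, h1, h2⟩ | ⟨j, h1, h2⟩)
      · simp only [Matrix.cons_val_zero, Matrix.cons_val_one, Matrix.head_cons] at h1 h2
        have := rep_len h1; have := rep_len h2; omega
      · simp only [Matrix.cons_val_zero, Matrix.cons_val_one, Matrix.head_cons] at h1 h2
        have := rep_len h1; have := rep_len h2; omega
    · rintro (h | h)
      · exact Or.inl ⟨p, by simp, by simp [h]⟩
      · exact Or.inr ⟨q, by simp [h], by simp⟩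
  have bad1 : ∀ π, 1 ≤ π → M.Accepts ![List.replicate (2*m+π) 0, List.replicate m 0] →
      False := by
    intro π hπ hacc
    rcases (hM' _ _).mp hacc with h | h <;> omega
  have bad2 : ∀ π, 1 ≤ π → M.Accepts ![List.replicate m 0, List.replicate (2*m+π) 0] →
      False := by
    intro π hπ hacc
    rcases (hM' _ _).mp hacc with h | h <;> omega
  -- contradiction from a tape-0 crossing point at first-coordinate value m
  have crossbad : ∀ j (s2 : M.State) b2, path M j = some (s2, m, b2) →
      M.tape s2 = 0 → b2 ≤ m → False := by
    intro j s2 b2 hpj ht2 hb2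
    have h2 : M.Accepts ![List.replicate m 0, List.replicate (2*m) 0] :=
      (hM' _ _).mpr (Or.inl rfl)
    obtain ⟨f2, hf2, run2⟩ := accepts_iff.mp h2
    obtain ⟨k3, s3, a3, b3, hp3, hc3⟩ :=
      path_exit (m + 2*m + 1) m (2*m) (by omega) (show path M 0 = some (M.start, 0, 0) from rfl) run2
    rcases hc3 with ⟨ht3, ha3, _, hb3u, u3, hu3, hU3⟩ | ⟨ht3, hb3, ha3l, ha3u, u3, hu3, hU3⟩
    · -- tape-0 exit of (m, 2m)
      have ha3m : a3 = m := by omega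
      rw [ha3m] at hp3
      obtain ⟨hs_eq, hb_eq⟩ := path_uniq0 hp3 ht3 hpj ht2
      -- b3 = b2 ≤ m, so remaining tape-1 content is ≥ m > K
      obtain ⟨π, hπ, hUp⟩ := U_pump hU3 (by omega : K ≤ 0 + 2*m - b3)
      have hrun := acc_build0 hp3 ht3 hu3 hUp
      rw [show b3 + (0 + 2*m - b3 + π) = 2*m + π from by omega] at hrun
      exact bad2 π hπ (accepts_iff.mpr ⟨f2, hf2, hrun⟩)
    · -- tape-1 exit of (m, 2m): impossible given the crossing point
      rcases Nat.lt_or_ge j k3 with hjk | hjk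
      · have := path_strict0 hpj ht2 hp3 hjk
        omega
      · obtain ⟨d, hd⟩ := Nat.exists_eq_add_of_le hjk
        have := path_mono d hp3 (by rw [← hd]; exact hpj)
        omega
  -- now analyze the accepted input (2m, m)
  have h1 : M.Accepts ![List.replicate (2*m) 0, List.replicate m 0] :=
    (hM' _ _).mpr (Or.inr rfl)
  obtain ⟨f, hf, run1⟩ := accepts_iff.mp h1
  obtain ⟨k', s', a', b', hp', hcase⟩ :=
    path_exit (2*m + m + 1) (2*m) m (by omega) (show path M 0 = some (M.start, 0, 0) from rfl) run1
  rcases hcase with ⟨ht', ha', _, hb'u, u, hu, hU⟩ | ⟨ht', hb', ha'l, ha'u, u, hu, hU⟩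
  · -- tape-0 exit: a' = 2m > m, get a crossing point
    obtain ⟨j, s2, b2, hpj, ht2, hb2⟩ := path_cross0 hp' m (by omega)
    exact crossbad j s2 b2 hpj ht2 (by omega)
  · -- tape-1 exit: b' = m, a' ≤ 2m
    rcases le_or_gt (a := a') (b := m) with hle | hgt
    · -- remaining on tape 0 is 2m - a' ≥ m > K : pump directly
      obtain ⟨π, hπ, hUp⟩ := U_pump hU (by omega : K ≤ 0 + 2*m - a')
      have hrun := acc_build1 hp' ht' hu hUp
      rw [show a' + (0 + 2*m - a' + π) = 2*m + π from by omega,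
        show b' = m from by omega] at hrun
      exact bad1 π hπ (accepts_iff.mpr ⟨f, hf, hrun⟩)
    · obtain ⟨j, s2, b2, hpj, ht2, hb2⟩ := path_cross0 hp' m hgt
      exact crossbad j s2 b2 hpj ht2 (by omega)

end Part3d


/-- Over `A = {x, y, z}`, the language `L₉ = {(y, x^n, x^{2n})} ∪ {(z, x^{2n}, x^n)}`
is quasi-regular, but its projection onto the last two coordinates, which equals
`{(x^n, x^{2n})} ∪ {(x^{2n}, x^n)}`, is not quasi-regular: the projection of a
quasi-regular language need not be quasi-regular. -/
theorem proj_of_quasiRegular_not_quasiRegular :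
    IsQuasiRegular L₉ ∧
    proj₉ =
      ({ v : Fin 2 → List (Fin 3) |
          ∃ m : ℕ, v 0 = List.replicate m 0 ∧ v 1 = List.replicate (2 * m) 0 } ∪
        { v : Fin 2 → List (Fin 3) |
          ∃ m : ℕ, v 0 = List.replicate (2 * m) 0 ∧ v 1 = List.replicate m 0 }) ∧
    ¬ IsQuasiRegular proj₉ := ⟨part1, part2, part3⟩
end Part1c
end

section
/- If L is a quasi-regular 2-variable language over a finite alphabet A, then the 1-variable language {v in A* : there exists u in A* with (u, v) in L} is a regular language over A. -/
/-! ### Auxiliary machinery for the projection construction -/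

namespace SemiSortedAAProof

open SemiSortedAA

variable {A : Type}

/-- One tape-0 move: the `Bool` records whether the terminal `$` of tape 0 has
already been consumed. -/
def Step0 (M : SemiSortedAA A 2) (p q : M.State × Bool) : Prop :=
  p.2 = false ∧ M.tape p.1 = 0 ∧
    ((∃ a : A, M.step p.1 (some a) = some q.1 ∧ q.2 = false) ∨
      (M.step p.1 none = some q.1 ∧ q.2 = true))

/-- `ε`-closure of tape-0 moves. -/
def E (M : SemiSortedAA A 2) : M.State × Bool → M.State × Bool → Prop :=
  Relation.ReflTransGen (Step0 M)

/-- The shape of the remaining content of tape 0 as a function of the flag. -/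
def Shape : Bool → List (Option A) → Prop
  | false, x => ∃ u : List A, x = u.map some ++ [none]
  | true, x => x = []

/-- The projection NFA over `A`, accepting `{v | ∃ u, M accepts (u, v)}`. -/
def proj (M : SemiSortedAA A 2) : NFA A (M.State × Bool) where
  step := fun p a =>
    { q | ∃ s', E M p (s', q.2) ∧ M.tape s' = 1 ∧ M.step s' (some a) = some q.1 }
  start := {(M.start, false)}
  accept := { q | ∃ p t f, E M q p ∧ M.tape p.1 = 1 ∧ M.step p.1 none = some t ∧
      E M (t, p.2) (f, true) ∧ f ∈ M.accept }

lemma evalFrom_mono {σ : Type} (N : NFA A σ) :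
    ∀ (v : List A) {S T : Set σ}, S ⊆ T → N.evalFrom S v ⊆ N.evalFrom T v := by
  intro v
  induction v with
  | nil => intro S T h; simpa using h
  | cons a v ih =>
      intro S T h
      have hst : N.stepSet S a ⊆ N.stepSet T a := by
        intro x hx
        rw [NFA.mem_stepSet] at hx ⊢
        obtain ⟨t, ht, hx⟩ := hx
        exact ⟨t, h ht, hx⟩
      simpa [NFA.evalFrom] using ih hst

lemma stepSet_singleton {σ : Type} (N : NFA A σ) (q : σ) (a : A) :
    N.stepSet {q} a = N.step q a := by
  simp [NFA.stepSet]

lemma step_mono_of_step0 {M : SemiSortedAA A 2} {p q : M.State × Bool}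
    (h : Step0 M p q) (a : A) : (proj M).step q a ⊆ (proj M).step p a := by
  rintro r ⟨s', hE, h1, h2⟩
  exact ⟨s', Relation.ReflTransGen.head h hE, h1, h2⟩

lemma accept_of_step0 {M : SemiSortedAA A 2} {p q : M.State × Bool}
    (h : Step0 M p q) (hq : q ∈ (proj M).accept) : p ∈ (proj M).accept := by
  obtain ⟨p', t, f, hE, h1, h2, h3, h4⟩ := hq
  exact ⟨p', t, f, Relation.ReflTransGen.head h hE, h1, h2, h3, h4⟩

lemma acc_of_step0 {M : SemiSortedAA A 2} {p q : M.State × Bool}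
    (h : Step0 M p q) (v : List A)
    (hv : ∃ r ∈ (proj M).evalFrom {q} v, r ∈ (proj M).accept) :
    ∃ r ∈ (proj M).evalFrom {p} v, r ∈ (proj M).accept := by
  cases v with
  | nil =>
      obtain ⟨r, hr, hacc⟩ := hv
      simp only [NFA.evalFrom_nil, Set.mem_singleton_iff] at hr
      subst hr
      exact ⟨p, by simp, accept_of_step0 h hacc⟩
  | cons a v =>
      obtain ⟨r, hr, hacc⟩ := hv
      refine ⟨r, ?_, hacc⟩
      have h1 : (proj M).evalFrom {q} (a :: v) = (proj M).evalFrom ((proj M).step q a) v := by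
        simp [NFA.evalFrom, stepSet_singleton]
      have h2 : (proj M).evalFrom {p} (a :: v) = (proj M).evalFrom ((proj M).step p a) v := by
        simp [NFA.evalFrom, stepSet_singleton]
      rw [h1] at hr
      rw [h2]
      exact evalFrom_mono (proj M) v (step_mono_of_step0 h a) hr

/-- A run with empty tape 1 consists only of tape-0 moves, hence is an `E`-path
ending with the flag set. -/
lemma E_of_run_tape1_empty {M : SemiSortedAA A 2} {s : M.State}
    {r : Fin 2 → List (Option A)} {f : M.State} (hrun : M.Run s r f) :
    ∀ b, r 1 = [] → Shape b (r 0) → E M (s, b) (f, true) := by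
  induction hrun with
  | nil s =>
      intro b _ hx
      cases b with
      | false => obtain ⟨u, hu⟩ := hx; exact absurd hu (by simp)
      | true => exact Relation.ReflTransGen.refl
  | @step s t f c rest r h hr hrest ih =>
      intro b h1 hx
      rcases (by omega : M.tape s = 0 ∨ M.tape s = 1) with ht | ht
      · rw [ht] at hr hrest ih
        rw [hr] at hx
        cases b with
        | true => exact absurd hx (by simp [Shape])
        | false =>
            obtain ⟨u, hu⟩ := hx
            cases u with
            | nil =>
                simp only [List.map_nil, List.nil_append, List.cons.injEq] at hu
                obtain ⟨hc, hrest'⟩ := hu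
                subst hc
                have hstep : Step0 M (s, false) (t, true) := ⟨rfl, ht, Or.inr ⟨h, rfl⟩⟩
                refine Relation.ReflTransGen.head hstep (ih true ?_ ?_)
                · simp [Function.update, h1]
                · simp [Shape, Function.update, ← hrest']
            | cons a u =>
                simp only [List.map_cons, List.cons_append, List.cons.injEq] at hu
                obtain ⟨hc, hrest'⟩ := hu
                subst hc
                have hstep : Step0 M (s, false) (t, false) := ⟨rfl, ht, Or.inl ⟨a, h, rfl⟩⟩
                refine Relation.ReflTransGen.head hstep (ih false ?_ ?_)
                · simp [Function.update, h1]
                · exact ⟨u, by simp [Function.update, hrest']⟩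
      · rw [ht] at hr
        rw [h1] at hr
        exact absurd hr (by simp)

lemma upd0 (x y r : List (Option A)) :
    Function.update ![x, y] (0 : Fin 2) r = ![r, y] := by
  funext i; fin_cases i <;> simp

lemma upd1 (x y r : List (Option A)) :
    Function.update ![x, y] (1 : Fin 2) r = ![x, r] := by
  funext i; fin_cases i <;> simp

/-- Prepending an `E`-path to a run. -/
lemma run_of_E {M : SemiSortedAA A 2} {p q : M.State × Bool} (h : E M p q) :
    ∀ {x y : List (Option A)} {f : M.State}, Shape q.2 x → M.Run q.1 ![x, y] f →
      ∃ x', Shape p.2 x' ∧ M.Run p.1 ![x', y] f := by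
  induction h using Relation.ReflTransGen.head_induction_on with
  | refl => intro x y f hx hr; exact ⟨x, hx, hr⟩
  | head hstep _ ih =>
      intro x y f hx hr
      obtain ⟨x1, hx1, hr1⟩ := ih hx hr
      obtain ⟨hb, ht, hcase⟩ := hstep
      rcases hcase with ⟨a, hstep', hb'⟩ | ⟨hstep', hb'⟩
      · rw [hb'] at hx1
        obtain ⟨u, hu⟩ := hx1
        refine ⟨some a :: x1, ?_, ?_⟩
        · rw [hb]; exact ⟨a :: u, by simp [hu]⟩
        · refine SemiSortedAA.Run.step (rest := x1) hstep' ?_ ?_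
          · rw [ht]; simp
          · rw [ht, upd0]; exact hr1
      · rw [hb'] at hx1
        have hx1' : x1 = [] := hx1
        subst hx1'
        refine ⟨[none], by rw [hb]; exact ⟨[], by simp⟩, ?_⟩
        refine SemiSortedAA.Run.step (rest := ([] : List (Option A))) hstep' ?_ ?_
        · rw [ht]; simp
        · rw [ht, upd0]; exact hr1

/-- Forward direction: a run of `M` yields an accepting computation of the NFA. -/
lemma fwd {M : SemiSortedAA A 2} {s : M.State} {r : Fin 2 → List (Option A)} {f : M.State}
    (hrun : M.Run s r f) :
    ∀ (b : Bool) (v : List A), Shape b (r 0) → r 1 = v.map some ++ [none] → f ∈ M.accept →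
      ∃ q ∈ (proj M).evalFrom {(s, b)} v, q ∈ (proj M).accept := by
  induction hrun with
  | nil s => intro b v _ hy _; exact absurd hy.symm (by simp)
  | @step s t f c rest r h hr hrest ih =>
      intro b v hx hy hf
      rcases (by omega : M.tape s = 0 ∨ M.tape s = 1) with ht | ht
      · rw [ht] at hr hrest ih
        rw [hr] at hx
        cases b with
        | true => exact absurd hx (by simp [Shape])
        | false =>
            obtain ⟨u, hu⟩ := hx
            cases u with
            | nil =>
                simp only [List.map_nil, List.nil_append, List.cons.injEq] at hu
                obtain ⟨hc, hrest'⟩ := hu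
                subst hc
                have hstep : Step0 M (s, false) (t, true) := ⟨rfl, ht, Or.inr ⟨h, rfl⟩⟩
                refine acc_of_step0 hstep v (ih true v ?_ ?_ hf)
                · simp [Shape, Function.update, ← hrest']
                · simp [Function.update, hy]
            | cons a u =>
                simp only [List.map_cons, List.cons_append, List.cons.injEq] at hu
                obtain ⟨hc, hrest'⟩ := hu
                subst hc
                have hstep : Step0 M (s, false) (t, false) := ⟨rfl, ht, Or.inl ⟨a, h, rfl⟩⟩
                refine acc_of_step0 hstep v (ih false v ?_ ?_ hf)
                · exact ⟨u, by simp [Function.update, hrest']⟩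
                · simp [Function.update, hy]
      · rw [ht] at hr hrest ih
        rw [hy] at hr
        cases v with
        | nil =>
            simp only [List.map_nil, List.nil_append, List.cons.injEq] at hr
            obtain ⟨hc, hrest'⟩ := hr
            subst hc
            refine ⟨(s, b), by simp, ?_⟩
            refine ⟨(s, b), t, f, Relation.ReflTransGen.refl, ht, h, ?_, hf⟩
            refine E_of_run_tape1_empty hrest b ?_ ?_
            · simp [Function.update, ← hrest']
            · simpa [Function.update, hy] using hx
        | cons a v =>
            simp only [List.map_cons, List.cons_append, List.cons.injEq] at hr
            obtain ⟨hc, hrest'⟩ := hr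
            subst hc
            obtain ⟨q, hq, hacc⟩ := ih b v
              (by simpa [Function.update] using hx)
              (by simp [Function.update, hrest']) hf
            refine ⟨q, ?_, hacc⟩
            have h1 : (proj M).evalFrom {(s, b)} (a :: v)
                = (proj M).evalFrom ((proj M).step (s, b) a) v := by
              simp [NFA.evalFrom, stepSet_singleton]
            rw [h1]
            have hmem : (t, b) ∈ (proj M).step (s, b) a :=
              ⟨s, Relation.ReflTransGen.refl, ht, h⟩
            exact evalFrom_mono (proj M) v (by simpa using hmem) hq

lemma mem_evalFrom_elim {σ : Type} (N : NFA A σ) :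
    ∀ (v : List A) {S : Set σ} {p : σ}, p ∈ N.evalFrom S v →
      ∃ q ∈ S, p ∈ N.evalFrom {q} v := by
  intro v
  induction v with
  | nil => intro S p hp; exact ⟨p, by simpa using hp, by simp⟩
  | cons a v ih =>
      intro S p hp
      have : p ∈ N.evalFrom (N.stepSet S a) v := hp
      obtain ⟨q, hq, hpq⟩ := ih this
      rw [NFA.mem_stepSet] at hq
      obtain ⟨s1, hs1, hq⟩ := hq
      refine ⟨s1, hs1, ?_⟩
      have : p ∈ N.evalFrom {q} v := hpq
      have h2 : N.evalFrom {s1} (a :: v) = N.evalFrom (N.step s1 a) v := by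
        simp [NFA.evalFrom, stepSet_singleton]
      rw [h2]
      exact evalFrom_mono N v (by simpa using hq) hpq

/-- Backward direction: an accepting computation of the NFA yields a run of `M`. -/
lemma bwd {M : SemiSortedAA A 2} :
    ∀ (v : List A) (s : M.State) (b : Bool),
      (∃ q ∈ (proj M).evalFrom {(s, b)} v, q ∈ (proj M).accept) →
      ∃ x, Shape b x ∧ ∃ f ∈ M.accept, M.Run s ![x, v.map some ++ [none]] f := by
  intro v
  induction v with
  | nil =>
      intro s b hv
      obtain ⟨q, hq, hacc⟩ := hv
      simp only [NFA.evalFrom_nil, Set.mem_singleton_iff] at hq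
      subst hq
      obtain ⟨p, t, f, hE, h1, h2, h3, h4⟩ := hacc
      have hnil : M.Run f ![([] : List (Option A)), []] f := by
        have : (![([] : List (Option A)), []]) = (fun _ => []) := by
          funext i; fin_cases i <;> simp
        rw [this]; exact SemiSortedAA.Run.nil f
      obtain ⟨x1, hx1, hr1⟩ := run_of_E h3 (by simp [Shape]) hnil
      have hr2 : M.Run p.1 ![x1, [none]] f := by
        refine SemiSortedAA.Run.step (rest := []) h2 ?_ ?_
        · rw [h1]; simp
        · rw [h1, upd1]; exact hr1
      obtain ⟨x, hx, hr⟩ := run_of_E hE hx1 hr2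
      exact ⟨x, hx, f, h4, by simpa using hr⟩
  | cons a v ih =>
      intro s b hv
      obtain ⟨q, hq, hacc⟩ := hv
      have h1 : (proj M).evalFrom {(s, b)} (a :: v)
          = (proj M).evalFrom ((proj M).step (s, b) a) v := by
        simp [NFA.evalFrom, stepSet_singleton]
      rw [h1] at hq
      obtain ⟨q0, hq0, hq⟩ := mem_evalFrom_elim (proj M) v hq
      obtain ⟨s', hE, ht, hstep⟩ := hq0
      obtain ⟨x1, hx1, f, hf, hr1⟩ := ih q0.1 q0.2 ⟨q, by simpa using hq, hacc⟩
      have hr2 : M.Run s' ![x1, some a :: (v.map some ++ [none])] f := by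
        refine SemiSortedAA.Run.step (rest := v.map some ++ [none]) hstep ?_ ?_
        · rw [ht]; simp
        · rw [ht, upd1]; exact hr1
      obtain ⟨x, hx, hr⟩ := run_of_E hE hx1 hr2
      exact ⟨x, hx, f, hf, by simpa using hr⟩

end SemiSortedAAProof

open SemiSortedAAProof in
/-- If `L` is a quasi-regular two-variable language over a finite alphabet `A`,
then `{v : ∃ u, (u, v) ∈ L}` is a regular (one-variable) language over `A`. -/
theorem regular_exists_of_quasiRegular {A : Type} [Fintype A]
    (L : Set (Fin 2 → List A)) (hL : IsQuasiRegular L) :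
    Language.IsRegular { v : List A | ∃ u : List A, ![u, v] ∈ L } := by
  obtain ⟨M, hM⟩ := hL
  letI := M.fintype
  refine ⟨Set (M.State × Bool), inferInstance, (proj M).toDFA, ?_⟩
  rw [NFA.toDFA_correct]
  ext v
  rw [NFA.mem_accepts]
  constructor
  · rintro ⟨q, hacc, hq⟩
    have : ∃ q ∈ (proj M).evalFrom {(M.start, false)} v, q ∈ (proj M).accept := by
      refine ⟨q, ?_, hacc⟩
      simpa [proj] using hq
    obtain ⟨x, hx, f, hf, hr⟩ := bwd v M.start false this
    obtain ⟨u, hu⟩ := hx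
    refine ⟨u, (hM _).mpr ⟨f, hf, ?_⟩⟩
    have heq : (fun i => ((![u, v]) i).map some ++ [none])
        = ![u.map some ++ [none], v.map some ++ [none]] := by
      funext i; fin_cases i <;> simp
    rw [heq]
    rw [hu] at hr
    exact hr
  · rintro ⟨u, huv⟩
    obtain ⟨f, hf, hr⟩ := (hM _).mp huv
    obtain ⟨q, hq, hacc⟩ := fwd hr false v ⟨u, by simp⟩ (by simp) hf
    refine ⟨q, hacc, ?_⟩
    simpa [proj] using hq
end

section
/- If L is a quasi-regular 2-variable language over a finite alphabet A, then the 1-variable language {v in A* : for all u in A*, (u, v) in L} is a regular language over A. -/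
namespace SemiSortedAA

variable {A : Type}

private lemma upd0 (U U' V : List (Option A)) :
    Function.update (![U, V] : Fin 2 → List (Option A)) 0 U' = ![U', V] := by
  funext i; fin_cases i <;> simp [Function.update]

private lemma upd1 (U V V' : List (Option A)) :
    Function.update (![U, V] : Fin 2 → List (Option A)) 1 V' = ![U, V'] := by
  funext i; fin_cases i <;> simp [Function.update]

variable (M : SemiSortedAA A 2)

/-- forced first step of a run -/
private lemma run_cons {s f : M.State} {r : Fin 2 → List (Option A)}
    {c : Option A} {rest : List (Option A)}
    (h : M.Run s r f) (hr : r (M.tape s) = c :: rest) :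
    ∃ t, M.step s c = some t ∧ M.Run t (Function.update r (M.tape s) rest) f := by
  cases h with
  | nil => simp at hr
  | step h' hr' hrun =>
    rw [hr] at hr'
    obtain ⟨rfl, rfl⟩ : _ ∧ _ := by injection hr' with h1 h2; exact ⟨h1.symm, h2.symm⟩
    exact ⟨_, h', hrun⟩

private lemma run_stuck {s f : M.State} {r : Fin 2 → List (Option A)}
    (h : M.Run s r f) (h0 : r (M.tape s) = []) : r = fun _ => [] := by
  cases h with
  | nil => rfl
  | step h' hr' hrun => rw [h0] at hr'; simp at hr'

/-- remaining content of the `u`-tape: `w $` if still alive, empty otherwise -/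
def ucon : Bool → List A → List (Option A)
  | true, w => w.map some ++ [none]
  | false, _ => []

/-- acceptance from a configuration -/
def AccF (x : M.State × Bool) (w : List A) (V : List (Option A)) : Prop :=
  ∃ f ∈ M.accept, M.Run x.1 ![ucon x.2 w, V] f

/-- a single guessed step on the `u`-tape -/
inductive UStep : (M.State × Bool) → (M.State × Bool) → Prop
  | letter {s t : M.State} {a : A} (h0 : M.tape s = 0)
      (h : M.step s (some a) = some t) : UStep (s, true) (t, true)
  | last {s t : M.State} (h0 : M.tape s = 0)
      (h : M.step s none = some t) : UStep (s, true) (t, false)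

def UReach : (M.State × Bool) → (M.State × Bool) → Prop :=
  Relation.ReflTransGen M.UStep

/-- locally rejecting configuration (when the `v`-content is nonempty) -/
def Bad (x : M.State × Bool) : Prop :=
  M.tape x.1 = 0 ∧ (x.2 = false ∨ ∃ c, M.step x.1 c = none)

section iffs

variable {M}

/- (I-a) -/
private lemma accF_letter {s t : M.State} {a : A} (h0 : M.tape s = 0)
    (h : M.step s (some a) = some t) (w : List A) (V : List (Option A)) :
    M.AccF (s, true) (a :: w) V ↔ M.AccF (t, true) w V := by
  constructor
  · rintro ⟨f, hf, hrun⟩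
    obtain ⟨t', ht', hrun'⟩ := run_cons M (c := some a) (rest := List.map some w ++ [none])
      hrun (by rw [h0]; simp [ucon])
    rw [h] at ht'; injection ht' with ht'; subst ht'
    rw [h0, upd0] at hrun'
    exact ⟨f, hf, hrun'⟩
  · rintro ⟨f, hf, hrun⟩
    refine ⟨f, hf, Run.step (rest := List.map some w ++ [none]) h (by rw [h0]; simp [ucon]) ?_⟩
    rw [h0, upd0]; exact hrun

/- (I-b) -/
private lemma accF_last {s t : M.State} (h0 : M.tape s = 0)
    (h : M.step s none = some t) (w : List A) (V : List (Option A)) :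
    M.AccF (s, true) [] V ↔ M.AccF (t, false) w V := by
  constructor
  · rintro ⟨f, hf, hrun⟩
    obtain ⟨t', ht', hrun'⟩ := run_cons M (c := none) (rest := [])
      hrun (by rw [h0]; simp [ucon])
    rw [h] at ht'; injection ht' with ht'; subst ht'
    rw [h0, upd0] at hrun'
    exact ⟨f, hf, hrun'⟩
  · rintro ⟨f, hf, hrun⟩
    refine ⟨f, hf, Run.step (rest := []) h (by rw [h0]; simp [ucon]) ?_⟩
    rw [h0, upd0]; exact hrun

/- (I-c) -/
private lemma accF_v {s t : M.State} {c : Option A} (h1 : M.tape s = 1)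
    (h : M.step s c = some t) (al : Bool) (w : List A) (V : List (Option A)) :
    M.AccF (s, al) w (c :: V) ↔ M.AccF (t, al) w V := by
  constructor
  · rintro ⟨f, hf, hrun⟩
    obtain ⟨t', ht', hrun'⟩ := run_cons M (c := c) (rest := V)
      hrun (by rw [h1]; simp)
    rw [h] at ht'; injection ht' with ht'; subst ht'
    rw [h1, upd1] at hrun'
    exact ⟨f, hf, hrun'⟩
  · rintro ⟨f, hf, hrun⟩
    refine ⟨f, hf, Run.step (rest := V) h (by rw [h1]; simp) ?_⟩
    rw [h1, upd1]; exact hrun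

/- no-run lemmas -/
private lemma noAccF_dead {s : M.State} (h0 : M.tape s = 0) {V : List (Option A)}
    (hV : V ≠ []) (w : List A) : ¬ M.AccF (s, false) w V := by
  rintro ⟨f, hf, hrun⟩
  have h2 := run_stuck M hrun (by rw [h0]; simp [ucon])
  have : V = [] := by have := congrFun h2 1; simpa using this
  exact hV this

private lemma noAccF_uletter {s : M.State} {a : A} (h0 : M.tape s = 0)
    (h : M.step s (some a) = none) (w : List A) (V : List (Option A)) :
    ¬ M.AccF (s, true) (a :: w) V := by
  rintro ⟨f, hf, hrun⟩
  obtain ⟨t', ht', -⟩ := run_cons M (c := some a) (rest := List.map some w ++ [none])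
    hrun (by rw [h0]; simp [ucon])
  rw [h] at ht'; exact Option.some_ne_none t' ht'.symm

private lemma noAccF_ulast {s : M.State} (h0 : M.tape s = 0)
    (h : M.step s none = none) (V : List (Option A)) :
    ¬ M.AccF (s, true) [] V := by
  rintro ⟨f, hf, hrun⟩
  obtain ⟨t', ht', -⟩ := run_cons M (c := none) (rest := [])
    hrun (by rw [h0]; simp [ucon])
  rw [h] at ht'; exact Option.some_ne_none t' ht'.symm

private lemma noAccF_v {s : M.State} {c : Option A} (h1 : M.tape s = 1)
    (h : M.step s c = none) (al : Bool) (w : List A) (V : List (Option A)) :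
    ¬ M.AccF (s, al) w (c :: V) := by
  rintro ⟨f, hf, hrun⟩
  obtain ⟨t', ht', -⟩ := run_cons M (c := c) (rest := V) hrun (by rw [h1]; simp)
  rw [h] at ht'; exact Option.some_ne_none t' ht'.symm

/-- a bad configuration yields a rejected `u`-continuation -/
private lemma bad_reject {x : M.State × Bool} (hb : M.Bad x)
    {V : List (Option A)} (hV : V ≠ []) : ∃ w, ¬ M.AccF x w V := by
  obtain ⟨x, al⟩ := x
  obtain ⟨h0, hrest⟩ := hb
  cases al with
  | false => exact ⟨[], noAccF_dead h0 hV []⟩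
  | true =>
    rcases hrest with h | ⟨c, hc⟩
    · exact absurd h (by simp)
    · cases c with
      | none => exact ⟨[], noAccF_ulast h0 hc V⟩
      | some a => exact ⟨[a], noAccF_uletter h0 hc [] V⟩

/-- lifting rejection backwards along guessed `u`-steps -/
private lemma ustep_reject {x y : M.State × Bool} (h : M.UStep x y)
    {V : List (Option A)} : (∃ w, ¬ M.AccF y w V) → ∃ w, ¬ M.AccF x w V := by
  rintro ⟨w, hw⟩
  cases h with
  | letter h0 hs => exact ⟨_ :: w, fun hacc => hw ((accF_letter h0 hs w V).mp hacc)⟩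
  | last h0 hs => exact ⟨[], fun hacc => hw ((accF_last h0 hs w V).mp hacc)⟩

private lemma ureach_reject {x y : M.State × Bool} (h : M.UReach x y)
    {V : List (Option A)} (hy : ∃ w, ¬ M.AccF y w V) : ∃ w, ¬ M.AccF x w V := by
  induction h using Relation.ReflTransGen.head_induction_on with
  | refl => exact hy
  | head hstep _ ih => exact ustep_reject hstep ih

end iffs




private lemma fin2 (i : Fin 2) : i = 0 ∨ i = 1 := by omega

section more1
variable {M}

private lemma ureach_head {x y d : M.State × Bool}
    (h : M.UStep x y) (h2 : M.UReach y d) : M.UReach x d :=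
  Relation.ReflTransGen.head h h2

/-- tracing a rejected run through the current `v`-letter -/
private lemma trace {V' : List (Option A)} (c : Option A) :
    ∀ (n : ℕ) (x : M.State × Bool) (w : List A), (ucon x.2 w).length ≤ n →
      ¬ M.AccF x w (c :: V') →
      (∃ d, M.UReach x d ∧ M.Bad d) ∨
      (∃ d, M.UReach x d ∧ M.tape d.1 = 1 ∧ M.step d.1 c = none) ∨
      (∃ d t w', M.UReach x d ∧ M.tape d.1 = 1 ∧ M.step d.1 c = some t ∧
        ¬ M.AccF (t, d.2) w' V') := by
  intro n
  induction n with
  | zero =>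
    rintro ⟨s, al⟩ w hlen hrej
    cases al with
    | true => simp [ucon] at hlen
    | false =>
      rcases fin2 (M.tape s) with h0 | h1
      · exact Or.inl ⟨(s, false), Relation.ReflTransGen.refl, h0, Or.inl rfl⟩
      · cases hst : M.step s c with
        | none => exact Or.inr (Or.inl ⟨(s, false), Relation.ReflTransGen.refl, h1, hst⟩)
        | some t =>
          refine Or.inr (Or.inr ⟨(s, false), t, w, Relation.ReflTransGen.refl, h1, hst, ?_⟩)
          exact fun hacc => hrej ((accF_v h1 hst false w V').mpr hacc)
  | succ n ih =>
    rintro ⟨s, al⟩ w hlen hrej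
    rcases fin2 (M.tape s) with h0 | h1
    · cases al with
      | false => exact Or.inl ⟨(s, false), Relation.ReflTransGen.refl, h0, Or.inl rfl⟩
      | true =>
        cases w with
        | nil =>
          cases hst : M.step s none with
          | none =>
            exact Or.inl ⟨(s, true), Relation.ReflTransGen.refl, h0, Or.inr ⟨none, hst⟩⟩
          | some t =>
            have hu : M.UStep (s, true) (t, false) := UStep.last h0 hst
            have hrej' : ¬ M.AccF (t, false) [] (c :: V') :=
              fun hacc => hrej ((accF_last h0 hst [] (c :: V')).mpr hacc)
            have hlen' : (ucon (t, false).2 ([] : List A)).length ≤ n := by simp [ucon]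
            rcases ih (t, false) [] hlen' hrej' with ⟨d, hr, hb⟩ | ⟨d, hr, hb⟩ | ⟨d, t', w', hr, h1, hst', hrej''⟩
            · exact Or.inl ⟨d, ureach_head hu hr, hb⟩
            · exact Or.inr (Or.inl ⟨d, ureach_head hu hr, hb⟩)
            · exact Or.inr (Or.inr ⟨d, t', w', ureach_head hu hr, h1, hst', hrej''⟩)
        | cons a w' =>
          cases hst : M.step s (some a) with
          | none =>
            exact Or.inl ⟨(s, true), Relation.ReflTransGen.refl, h0, Or.inr ⟨some a, hst⟩⟩
          | some t =>
            have hu : M.UStep (s, true) (t, true) := UStep.letter h0 hst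
            have hrej' : ¬ M.AccF (t, true) w' (c :: V') :=
              fun hacc => hrej ((accF_letter h0 hst w' (c :: V')).mpr hacc)
            have hlen' : (ucon (t, true).2 w').length ≤ n := by
              simp only [ucon] at hlen ⊢
              simp at hlen ⊢; omega
            rcases ih (t, true) w' hlen' hrej' with ⟨d, hr, hb⟩ | ⟨d, hr, hb⟩ | ⟨d, t', w'', hr, h1, hst', hrej''⟩
            · exact Or.inl ⟨d, ureach_head hu hr, hb⟩
            · exact Or.inr (Or.inl ⟨d, ureach_head hu hr, hb⟩)
            · exact Or.inr (Or.inr ⟨d, t', w'', ureach_head hu hr, h1, hst', hrej''⟩)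
    · cases hst : M.step s c with
      | none => exact Or.inr (Or.inl ⟨(s, al), Relation.ReflTransGen.refl, h1, hst⟩)
      | some t =>
        refine Or.inr (Or.inr ⟨(s, al), t, w, Relation.ReflTransGen.refl, h1, hst, ?_⟩)
        exact fun hacc => hrej ((accF_v h1 hst al w V').mpr hacc)

end more1

/-- the closure of a configuration under guessed `u`-moves, with the sink `none`
added whenever a locally rejecting configuration is reachable -/
def Clo (x : M.State × Bool) : Set (Option (M.State × Bool)) :=
  {y | (∃ d, M.UReach x d ∧ y = some d) ∨ (y = none ∧ ∃ d, M.UReach x d ∧ M.Bad d)}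

/-- some `u`-continuation is rejected when only the final `$` of `v` remains -/
def RejEnd (x : M.State × Bool) : Prop := ∃ w, ¬ M.AccF x w [none]

/-- the NFA over `A` accepting `{v | ∃ u, ¬ Accepts (u, v)}` -/
def toNFA : NFA A (Option (M.State × Bool)) where
  step := fun y a =>
    match y with
    | none => {none}
    | some x => {z | M.tape x.1 = 1 ∧
        ((∃ t, M.step x.1 (some a) = some t ∧ z ∈ M.Clo (t, x.2)) ∨
         (M.step x.1 (some a) = none ∧ z = none))}
  start := M.Clo (M.start, true)
  accept := {y | y = none ∨ ∃ x, y = some x ∧ M.RejEnd x}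

section more2
variable {M}

private lemma some_mem_clo {x d : M.State × Bool}
    (h : M.UReach x d) : some d ∈ M.Clo x := Or.inl ⟨d, h, rfl⟩

private lemma self_mem_clo (x : M.State × Bool) :
    some x ∈ M.Clo x := some_mem_clo Relation.ReflTransGen.refl

private lemma none_mem_clo {x d : M.State × Bool}
    (h : M.UReach x d) (hb : M.Bad d) : none ∈ M.Clo x := Or.inr ⟨rfl, d, h, hb⟩

end more2

section NFAlemmas

variable {σ : Type}

private lemma evalFrom_mono (N : NFA A σ) : ∀ (v : List A) {S T : Set σ}, S ⊆ T →
    N.evalFrom S v ⊆ N.evalFrom T v := by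
  intro v
  induction v with
  | nil => intro S T h; simpa [NFA.evalFrom] using h
  | cons a v ih =>
    intro S T h
    have : N.stepSet S a ⊆ N.stepSet T a := by
      intro z hz
      rw [NFA.mem_stepSet] at hz ⊢
      obtain ⟨s, hs, hz⟩ := hz
      exact ⟨s, h hs, hz⟩
    exact ih this

private lemma evalFrom_singleton (N : NFA A σ) : ∀ (v : List A) {S : Set σ} {y : σ},
    y ∈ N.evalFrom S v → ∃ z ∈ S, y ∈ N.evalFrom {z} v := by
  intro v
  induction v with
  | nil => intro S y h; exact ⟨y, h, rfl⟩
  | cons a v ih =>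
    intro S y h
    obtain ⟨z, hz, hy⟩ := ih h
    rw [NFA.mem_stepSet] at hz
    obtain ⟨s, hs, hz⟩ := hz
    refine ⟨s, hs, ?_⟩
    have h1 : ({z} : Set σ) ⊆ N.stepSet {s} a := by
      intro z' hz'
      rw [Set.mem_singleton_iff] at hz'; subst hz'
      rw [NFA.mem_stepSet]; exact ⟨s, rfl, hz⟩
    exact evalFrom_mono N v h1 hy

end NFAlemmas

section more3
variable {M}

private lemma sink_accept :
    ∀ (v : List A) (S : Set (Option (M.State × Bool))), none ∈ S →
      ∃ y ∈ M.toNFA.accept, y ∈ M.toNFA.evalFrom S v := by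
  intro v
  induction v with
  | nil => intro S h; exact ⟨none, Or.inl rfl, h⟩
  | cons a v ih =>
    intro S h
    refine ih _ ?_
    rw [NFA.mem_stepSet]
    exact ⟨none, h, rfl⟩

end more3



section key

variable {M}

private lemma key : ∀ (v : List A) (x : M.State × Bool),
    (∃ y ∈ M.toNFA.accept, y ∈ M.toNFA.evalFrom (M.Clo x) v) ↔
      ∃ w, ¬ M.AccF x w (v.map some ++ [none]) := by
  intro v
  induction v with
  | nil =>
    intro x
    constructor
    · rintro ⟨y, hacc, hy⟩
      rw [show M.toNFA.evalFrom (M.Clo x) [] = M.Clo x from rfl] at hy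
      rcases hacc with rfl | ⟨x', rfl, hrej⟩
      · rcases hy with ⟨d, _, h⟩ | ⟨_, d, hr, hb⟩
        · exact absurd h (by simp)
        · exact ureach_reject hr (bad_reject hb (by simp))
      · rcases hy with ⟨d, hr, hd⟩ | ⟨h, _⟩
        · injection hd with hd; subst hd
          exact ureach_reject hr hrej
        · exact absurd h (by simp)
    · rintro ⟨w, hw⟩
      exact ⟨some x, Or.inr ⟨x, rfl, w, hw⟩, self_mem_clo x⟩
  | cons a v ih =>
    intro x
    have heval : M.toNFA.evalFrom (M.Clo x) (a :: v)
        = M.toNFA.evalFrom (M.toNFA.stepSet (M.Clo x) a) v := rfl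
    constructor
    · rintro ⟨y, hacc, hy⟩
      simp only [List.map_cons, List.cons_append]
      rw [heval] at hy
      obtain ⟨z, hz, hy⟩ := evalFrom_singleton M.toNFA v hy
      rw [NFA.mem_stepSet] at hz
      obtain ⟨s₀, hs₀, hz⟩ := hz
      rcases hs₀ with ⟨d, hr, rfl⟩ | ⟨rfl, d, hr, hb⟩
      · -- s₀ = some d
        obtain ⟨ds, dal⟩ := d
        obtain ⟨h1, hor⟩ := hz
        rcases hor with ⟨t, hst, hzc⟩ | ⟨hst, rfl⟩
        · have hsub : ({z} : Set (Option (M.State × Bool))) ⊆ M.Clo (t, dal) := by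
            intro z' hz'
            rw [Set.mem_singleton_iff] at hz'; subst hz'; exact hzc
          have hy' : y ∈ M.toNFA.evalFrom (M.Clo (t, dal)) v :=
            evalFrom_mono M.toNFA v hsub hy
          obtain ⟨w, hw⟩ := (ih (t, dal)).mp ⟨y, hacc, hy'⟩
          refine ureach_reject hr ⟨w, fun hacc' => hw ?_⟩
          exact (accF_v h1 hst dal w (v.map some ++ [none])).mp hacc'
        · exact ureach_reject hr ⟨[], noAccF_v h1 hst dal [] (v.map some ++ [none])⟩
      · -- s₀ = none : sink reachable already
        exact ureach_reject hr (bad_reject hb (by simp))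
    · rintro ⟨w, hw⟩
      simp only [List.map_cons, List.cons_append] at hw
      rw [heval]
      rcases trace (some a) (ucon x.2 w).length x w le_rfl hw with
        ⟨d, hr, hb⟩ | ⟨d, hr, h1, hst⟩ | ⟨d, t, w', hr, h1, hst, hrej⟩
      · refine sink_accept v _ ?_
        rw [NFA.mem_stepSet]
        exact ⟨none, none_mem_clo hr hb, rfl⟩
      · refine sink_accept v _ ?_
        rw [NFA.mem_stepSet]
        exact ⟨some d, some_mem_clo hr, h1, Or.inr ⟨hst, rfl⟩⟩
      · obtain ⟨y, hacc, hy⟩ := (ih (t, d.2)).mpr ⟨w', hrej⟩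
        have hsub : M.Clo (t, d.2) ⊆ M.toNFA.stepSet (M.Clo x) a := by
          intro z hz
          rw [NFA.mem_stepSet]
          exact ⟨some d, some_mem_clo hr, h1, Or.inl ⟨t, hst, hz⟩⟩
        exact ⟨y, hacc, evalFrom_mono M.toNFA v hsub hy⟩

private lemma accF_start (u v : List A) :
    M.AccF (M.start, true) u (v.map some ++ [none]) ↔ M.Accepts ![u, v] := by
  have : (fun i => ((![u, v] : Fin 2 → List A) i).map some ++ [none])
      = ![List.map some u ++ [none], List.map some v ++ [none]] := by
    funext i; fin_cases i <;> simp
  unfold Accepts AccF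
  rw [this]
  rfl

end key

lemma toNFA_accepts (v : List A) :
    v ∈ M.toNFA.accepts ↔ ∃ u, ¬ M.Accepts ![u, v] := by
  rw [NFA.mem_accepts]
  have h := key v (M.start, true)
  rw [show M.toNFA.evalFrom M.toNFA.start v
      = M.toNFA.evalFrom (M.Clo (M.start, true)) v from rfl]
  rw [h]
  constructor
  · rintro ⟨w, hw⟩; exact ⟨w, fun h' => hw ((accF_start w v).mpr h')⟩
  · rintro ⟨u, hu⟩; exact ⟨u, fun h' => hu ((accF_start u v).mp h')⟩

end SemiSortedAA

/-- If `L` is a quasi-regular two-variable language over a finite alphabet `A`,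
then `{v : ∀ u, (u, v) ∈ L}` is a regular (one-variable) language over `A`. -/
theorem regular_forall_of_quasiRegular {A : Type} [Fintype A]
    (L : Set (Fin 2 → List A)) (hL : IsQuasiRegular L) :
    Language.IsRegular { v : List A | ∀ u : List A, ![u, v] ∈ L } := by
  classical
  obtain ⟨M, hM⟩ := hL
  haveI : Fintype M.State := M.fintype
  refine ⟨Set (Option (M.State × Bool)), inferInstance,
    ⟨M.toNFA.toDFA.step, M.toNFA.toDFA.start, (M.toNFA.toDFA.accept)ᶜ⟩, ?_⟩
  ext v
  show _ ↔ v ∈ {v : List A | ∀ u : List A, ![u, v] ∈ L}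
  rw [DFA.mem_accepts]
  show M.toNFA.toDFA.eval v ∈ (M.toNFA.toDFA.accept)ᶜ ↔ _
  rw [Set.mem_compl_iff]
  have h2 : M.toNFA.toDFA.eval v ∈ M.toNFA.toDFA.accept
      ↔ ∃ u, ¬ M.Accepts ![u, v] := by
    rw [← DFA.mem_accepts, NFA.toDFA_correct]
    exact M.toNFA_accepts v
  rw [h2]
  simp only [not_exists, not_not, Set.mem_setOf_eq]
  exact forall_congr' fun u => ((hM ![u, v]).symm)
end

section
/- Let L be an n-variable weakly regular language over a finite alphabet A. Then there exist a finite alphabet B containing A and an (n+1)-variable quasi-regular language M over B such that L = {(x_1,...,x_n) in (A*)^n : there exists x_0 in B* with (x_0, x_1,...,x_n) in M}. That is, every weakly regular language is the projection of a quasi-regular language in one more variable. -/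
/-- An `n`-tape non-deterministic semi-sorted asynchronous automaton (SAA) over `A`:
a non-deterministic finite state automaton over `A ∪ {$}` (possibly with
`ε`-transitions and several start states; the padding symbol `$` is modelled by
`none : Option A`) together with a partition of its state set into `n` sets
(recorded by `tape`, where `tape s = i` means `s ∈ S_i`). -/
structure SAA (A : Type) (n : ℕ) where
  State : Type
  fintype : Fintype State
  start : Set State
  accept : Set State
  /-- non-deterministic transitions labelled by letters of `A ∪ {$}` -/
  step : State → Option A → Set State
  /-- `ε`-transitions -/
  eps : State → Set State
  /-- the index `i` such that the state lies in `S_i` -/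
  tape : State → Fin n

namespace SAA

variable {A : Type} {n : ℕ}

/-- Runs of a non-deterministic semi-sorted asynchronous automaton: `M.Run s r f`
means that starting at `s` with remaining content `r i` on the `i`-th tape, the
automaton can consume all the remaining content and end at `f`, reading from tape
`M.tape s` when in state `s` (this is the existence of an appropriate shuffle). -/
inductive Run (M : SAA A n) :
    M.State → (Fin n → List (Option A)) → M.State → Prop
  | nil (s : M.State) : Run M s (fun _ => []) s
  | eps {s t f : M.State} {r : Fin n → List (Option A)}
      (h : t ∈ M.eps s) (hrun : Run M t r f) : Run M s r f
  | step {s t f : M.State} {c : Option A} {rest : List (Option A)}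
      {r : Fin n → List (Option A)}
      (h : t ∈ M.step s c)
      (hr : r (M.tape s) = c :: rest)
      (hrun : Run M t (Function.update r (M.tape s) rest) f) :
      Run M s r f

/-- The SAA accepts `(w 1, …, w n)` if some shuffle of `(w 1 $, …, w n $)` labels a
path from a start state to an accept state, each letter from the `i`-th word being
read while the automaton is in a state of `S_i`. -/
def Accepts (M : SAA A n) (w : Fin n → List A) : Prop :=
  ∃ s₀ ∈ M.start, ∃ f ∈ M.accept,
    M.Run s₀ (fun i => (w i).map some ++ [none]) f

end SAA

/-- An `n`-variable language is weakly regular if it is the language accepted by some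
`n`-tape non-deterministic semi-sorted asynchronous automaton. -/
def IsWeaklyRegular {A : Type} {n : ℕ} (L : Set (Fin n → List A)) : Prop :=
  ∃ M : SAA A n, ∀ w, w ∈ L ↔ M.Accepts w

section Construction

open scoped Classical

variable {A : Type} [Fintype A] {n : ℕ}

/-- The extended alphabet: `A` plus choice symbols. -/
abbrev BAlpha (N : SAA A n) : Type := A ⊕ (N.State ⊕ (Option A × N.State))

/-- States of the determinization. -/
abbrev DState (N : SAA A n) : Type :=
  Option N.State ⊕ ((N.State × Option A × N.State) ⊕ Unit)

noncomputable def detStep (N : SAA A n) : DState N → Option (BAlpha N) → Option (DState N)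
  | Sum.inl none, some (Sum.inr (Sum.inl t)) =>
      if t ∈ N.start then some (Sum.inl (some t)) else none
  | Sum.inl (some s), some (Sum.inr (Sum.inl t)) =>
      if t ∈ N.eps s then some (Sum.inl (some t)) else none
  | Sum.inl (some s), some (Sum.inr (Sum.inr (c, t))) =>
      if t ∈ N.step s c then some (Sum.inr (Sum.inl (s, c, t))) else none
  | Sum.inl (some s), none =>
      if s ∈ N.accept then some (Sum.inr (Sum.inr ())) else none
  | Sum.inr (Sum.inl (s, c, t)), x =>
      if x = c.map Sum.inl then some (Sum.inl (some t)) else none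
  | _, _ => none

def detTape (N : SAA A n) : DState N → Fin (n + 1)
  | Sum.inr (Sum.inl (s, _, _)) => (N.tape s).succ
  | _ => 0

noncomputable def detOf (N : SAA A n) : SemiSortedAA (BAlpha N) (n + 1) where
  State := DState N
  fintype := by letI : Fintype N.State := N.fintype; infer_instance
  start := Sum.inl none
  accept := {Sum.inr (Sum.inr ())}
  step := detStep N
  tape := detTape N

end Construction

section Lemmas

variable {A : Type} [Fintype A] {n : ℕ} (N : SAA A n)

/-- letter embedding `Option A → Option (BAlpha N)` -/
abbrev lemb (N : SAA A n) : Option A → Option (BAlpha N) := Option.map Sum.inl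

lemma doneRun {R : Fin (n+1) → List (Option (BAlpha N))} {f : DState N}
    (h : (detOf N).Run (Sum.inr (Sum.inr ())) R f) : R = fun _ => [] := by
  obtain ⟨q', hq⟩ : ∃ q' : (detOf N).State, q' = Sum.inr (Sum.inr ()) := ⟨_, rfl⟩
  obtain ⟨f', hf'⟩ : ∃ f' : (detOf N).State, f' = f := ⟨f, rfl⟩
  rw [← hq] at h
  subst hf'
  cases h with
  | nil => rfl
  | step h hr hrun => subst hq; simp [detOf, detStep] at h

lemma fwd {s f : N.State} {r : Fin n → List (Option A)} (hrun : N.Run s r f) :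
    f ∈ N.accept →
    ∃ g : List (BAlpha N),
      ∀ R : Fin (n + 1) → List (Option (BAlpha N)),
        R 0 = g.map some ++ [none] →
        (∀ i : Fin n, R i.succ = (r i).map (lemb N)) →
        (detOf N).Run (Sum.inl (some s)) R (Sum.inr (Sum.inr ())) := by
  induction hrun with
  | nil s =>
    intro hacc
    refine ⟨[], fun R h0 hsucc => ?_⟩
    refine SemiSortedAA.Run.step (t := Sum.inr (Sum.inr ())) (c := none) (rest := []) ?_ ?_ ?_
    · simp [detOf, detStep, hacc]
    · simpa [detOf, detTape] using h0
    · have : Function.update R ((detOf N).tape (Sum.inl (some s))) ([] : List (Option (BAlpha N)))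
          = fun _ => [] := by
        funext j
        rcases Fin.eq_zero_or_eq_succ j with hj | ⟨i, hj⟩
        · subst hj; simp [detOf, detTape]
        · subst hj
          have : ((detOf N).tape (Sum.inl (some s))) = 0 := rfl
          rw [this, Function.update_of_ne (Fin.succ_ne_zero i)]
          simpa using hsucc i
      rw [this]
      exact SemiSortedAA.Run.nil _
  | eps h hrun ih =>
    rename_i s t f r
    intro hacc
    obtain ⟨g, hg⟩ := ih hacc
    refine ⟨Sum.inr (Sum.inl t) :: g, fun R h0 hsucc => ?_⟩
    refine SemiSortedAA.Run.step (t := Sum.inl (some t)) (c := some (Sum.inr (Sum.inl t)))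
      (rest := g.map some ++ [none]) ?_ ?_ ?_
    · simp [detOf, detStep, h]
    · simpa [detOf, detTape] using h0
    · apply hg
      · have : ((detOf N).tape (Sum.inl (some s))) = 0 := rfl
        rw [this, Function.update_self]
      · intro i
        have : ((detOf N).tape (Sum.inl (some s))) = 0 := rfl
        rw [this, Function.update_of_ne (Fin.succ_ne_zero i)]
        exact hsucc i
  | step h hr hrun ih =>
    rename_i s t f c rest r
    intro hacc
    obtain ⟨g, hg⟩ := ih hacc
    refine ⟨Sum.inr (Sum.inr (c, t)) :: g, fun R h0 hsucc => ?_⟩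
    refine SemiSortedAA.Run.step (t := Sum.inr (Sum.inl (s, c, t))) (c := some (Sum.inr (Sum.inr (c, t))))
      (rest := g.map some ++ [none]) ?_ ?_ ?_
    · simp [detOf, detStep, h]
    · simpa [detOf, detTape] using h0
    · set R₁ := Function.update R ((detOf N).tape (Sum.inl (some s))) (g.map some ++ [none])
        with hR₁
    -- second step: read `lemb N c` from tape `(N.tape s).succ`
      refine SemiSortedAA.Run.step (t := Sum.inl (some t)) (c := lemb N c) (rest := rest.map (lemb N)) ?_ ?_ ?_
      · simp [detOf, detStep, lemb]
      · have ht : ((detOf N).tape (Sum.inr (Sum.inl (s, c, t)) : DState N)) = (N.tape s).succ := rfl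
        rw [ht, hR₁]
        have h0' : ((detOf N).tape (Sum.inl (some s) : DState N)) = 0 := rfl
        rw [h0', Function.update_of_ne (Fin.succ_ne_zero _)]
        rw [hsucc (N.tape s), hr]
        simp
      · apply hg
        · have ht : ((detOf N).tape (Sum.inr (Sum.inl (s, c, t)) : DState N)) = (N.tape s).succ := rfl
          rw [ht, Function.update_of_ne (Fin.succ_ne_zero _).symm, hR₁]
          have h0' : ((detOf N).tape (Sum.inl (some s) : DState N)) = 0 := rfl
          rw [h0', Function.update_self]
        · intro i
          have ht : ((detOf N).tape (Sum.inr (Sum.inl (s, c, t)) : DState N)) = (N.tape s).succ := rfl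
          rw [ht]
          by_cases hi : i = N.tape s
          · subst hi
            rw [Function.update_self, Function.update_self]
          · rw [Function.update_of_ne (by simpa [Fin.succ_inj] using hi),
              Function.update_of_ne hi, hR₁]
            have h0' : ((detOf N).tape (Sum.inl (some s) : DState N)) = 0 := rfl
            rw [h0', Function.update_of_ne (Fin.succ_ne_zero i)]
            exact hsucc i

end Lemmas

section Bwd

variable {A : Type} [Fintype A] {n : ℕ} (N : SAA A n)

lemma bwd {q : DState N} {R : Fin (n+1) → List (Option (BAlpha N))} {f : DState N}
    (hrun : (detOf N).Run q R f) :
    f = Sum.inr (Sum.inr ()) →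
    ∀ r : Fin n → List (Option A), (∀ i : Fin n, R i.succ = (r i).map (lemb N)) →
      ((∀ s, q = Sum.inl (some s) → ∃ f', f' ∈ N.accept ∧ N.Run s r f') ∧
       (∀ s c t, q = Sum.inr (Sum.inl (s, c, t)) → t ∈ N.step s c →
          ∃ f', f' ∈ N.accept ∧ N.Run s r f') ∧
       (q = Sum.inl none → ∃ s₀, s₀ ∈ N.start ∧ ∃ f', f' ∈ N.accept ∧ N.Run s₀ r f')) := by
  obtain ⟨q', hq⟩ : ∃ q' : (detOf N).State, q' = q := ⟨q, rfl⟩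
  obtain ⟨f', hf'⟩ : ∃ f' : (detOf N).State, f' = f := ⟨f, rfl⟩
  subst hq hf'
  induction hrun with
  | nil q =>
    intro hf r hsucc
    subst hf
    exact ⟨fun s h => by simp at h, fun s c t h => by simp at h, fun h => by simp at h⟩
  | step h hr hrun ih =>
    rename_i q t f c rest R
    intro hf r hsucc
    refine ⟨?_, ?_, ?_⟩
    · -- q = Sum.inl (some s) : simulating N at s, reading guess tape 0
      rintro s rfl
      have htape : ((detOf N).tape (Sum.inl (some s) : DState N)) = 0 := rfl
      rw [htape] at hr
      have hsucc' : ∀ i : Fin n,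
          Function.update R 0 rest i.succ = (r i).map (lemb N) := by
        intro i; rw [Function.update_of_ne (Fin.succ_ne_zero i)]; exact hsucc i
      match c with
      | none =>
        -- reading $ on guess tape: must be accepting, go to done
        have hs : s ∈ N.accept ∧ t = Sum.inr (Sum.inr ()) := by
          by_cases hacc : s ∈ N.accept <;> simp [detOf, detStep, hacc] at h
          · exact ⟨hacc, Option.some.inj h.symm⟩
        obtain ⟨hacc, rfl⟩ := hs
        have hempty := doneRun N hrun
        have hr' : r = fun _ => [] := by
          funext i
          have := congrFun hempty i.succ
          rw [htape, Function.update_of_ne (Fin.succ_ne_zero i), hsucc i] at this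
          simpa using this
        exact ⟨s, hacc, hr' ▸ SAA.Run.nil s⟩
      | some (Sum.inl a) => simp [detOf, detStep] at h
      | some (Sum.inr (Sum.inl t')) =>
        have hs : t' ∈ N.eps s ∧ t = Sum.inl (some t') := by
          by_cases heps : t' ∈ N.eps s <;> simp [detOf, detStep, heps] at h
          · exact ⟨heps, Option.some.inj h.symm⟩
        obtain ⟨heps, rfl⟩ := hs
        obtain ⟨f', hf', hrunN⟩ := (ih hf r (fun i => htape ▸ hsucc' i)).1 t' rfl
        exact ⟨f', hf', SAA.Run.eps heps hrunN⟩
      | some (Sum.inr (Sum.inr (c₀, t'))) =>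
        have hs : t' ∈ N.step s c₀ ∧ t = Sum.inr (Sum.inl (s, c₀, t')) := by
          by_cases hst : t' ∈ N.step s c₀ <;> simp [detOf, detStep, hst] at h
          · exact ⟨hst, Option.some.inj h.symm⟩
        obtain ⟨hst, rfl⟩ := hs
        obtain ⟨f', hf', hrunN⟩ :=
          (ih hf r (fun i => htape ▸ hsucc' i)).2.1 s c₀ t' rfl hst
        exact ⟨f', hf', hrunN⟩
    · -- q = intermediate state (s, c₀, t₀)
      rintro s c₀ t₀ rfl hst
      have htape : ((detOf N).tape (Sum.inr (Sum.inl (s, c₀, t₀)) : DState N))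
          = (N.tape s).succ := rfl
      rw [htape] at hr
      have hc : c = lemb N c₀ ∧ t = Sum.inl (some t₀) := by
        by_cases hcc : c = Option.map Sum.inl c₀ <;> simp [detOf, detStep, hcc] at h
        · exact ⟨hcc, Option.some.inj h.symm⟩
      obtain ⟨rfl, rfl⟩ := hc
      -- decompose r (N.tape s)
      have hmap : (r (N.tape s)).map (lemb N) = lemb N c₀ :: rest := by
        rw [← hsucc (N.tape s)]; exact hr
      obtain ⟨c₁, rest₁, hr1, hc1, hrest1⟩ := List.map_eq_cons_iff.mp hmap
      have hc₁ : c₁ = c₀ := by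
        have : Function.Injective (lemb N) :=
          Option.map_injective (fun a b hab => by injection hab)
        exact this hc1
      subst hc₁
      have hsucc' : ∀ i : Fin n,
          Function.update R ((N.tape s).succ) rest i.succ
            = ((Function.update r (N.tape s) rest₁) i).map (lemb N) := by
        intro i
        by_cases hi : i = N.tape s
        · subst hi; rw [Function.update_self, Function.update_self]; exact hrest1.symm
        · rw [Function.update_of_ne (by simpa [Fin.succ_inj] using hi),
            Function.update_of_ne hi]
          exact hsucc i
      obtain ⟨f', hf', hrunN⟩ :=
        (ih hf (Function.update r (N.tape s) rest₁)
          (fun i => htape ▸ hsucc' i)).1 t₀ rfl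
      exact ⟨f', hf', SAA.Run.step hst hr1 hrunN⟩
    · -- q = initial state
      rintro rfl
      have htape : ((detOf N).tape (Sum.inl none : DState N)) = 0 := rfl
      rw [htape] at hr
      have hsucc' : ∀ i : Fin n,
          Function.update R 0 rest i.succ = (r i).map (lemb N) := by
        intro i; rw [Function.update_of_ne (Fin.succ_ne_zero i)]; exact hsucc i
      match c with
      | none => simp [detOf, detStep] at h
      | some (Sum.inl a) => simp [detOf, detStep] at h
      | some (Sum.inr (Sum.inr (c₀, t'))) => simp [detOf, detStep] at h
      | some (Sum.inr (Sum.inl t')) =>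
        have hs : t' ∈ N.start ∧ t = Sum.inl (some t') := by
          by_cases hstart : t' ∈ N.start <;> simp [detOf, detStep, hstart] at h
          · exact ⟨hstart, Option.some.inj h.symm⟩
        obtain ⟨hstart, rfl⟩ := hs
        obtain ⟨f', hf', hrunN⟩ := (ih hf r (fun i => htape ▸ hsucc' i)).1 t' rfl
        exact ⟨t', hstart, f', hf', hrunN⟩

end Bwd

/-- Every weakly regular `n`-variable language over a finite alphabet `A` is the
projection of a quasi-regular language in one more variable: there are a finite
alphabet `B` containing `A` (via an embedding `ι`) and a quasi-regular
`(n+1)`-variable language `M` over `B` such that `L` consists exactly of the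
tuples `(x_1, …, x_n)` of `A`-words with `(x_0, x_1, …, x_n) ∈ M` for some
`B`-word `x_0`. -/
theorem weaklyRegular_is_proj_of_quasiRegular {A : Type} [Fintype A] {n : ℕ}
    (hn : 1 ≤ n) (L : Set (Fin n → List A)) (hL : IsWeaklyRegular L) :
    ∃ (B : Type) (_ : Fintype B) (ι : A ↪ B) (M : Set (Fin (n + 1) → List B)),
      IsQuasiRegular M ∧
      ∀ w : Fin n → List A,
        w ∈ L ↔ ∃ x₀ : List B, Fin.cons x₀ (fun i => (w i).map ι) ∈ M := by
  obtain ⟨N, hN⟩ := hL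
  letI : Fintype N.State := N.fintype
  refine ⟨BAlpha N, inferInstance, ⟨Sum.inl, Sum.inl_injective⟩,
    {v | (detOf N).Accepts v}, ⟨detOf N, fun _ => Iff.rfl⟩, fun w => ?_⟩
  have hsucc0 : ∀ x₀ : List (BAlpha N), ∀ i : Fin n,
      ((fun j => ((Fin.cons x₀ (fun i => (w i).map Sum.inl) : Fin (n+1) → List (BAlpha N)) j).map some
        ++ [none]) i.succ)
      = (((w i).map some ++ [none]).map (lemb N)) := by
    intro x₀ i
    simp [Fin.cons_succ, List.map_map, lemb, Function.comp]
  constructor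
  · intro hw
    obtain ⟨s₀, hs₀, f, hf, hrun⟩ := (hN w).mp hw
    obtain ⟨g, hg⟩ := fwd N hrun hf
    refine ⟨Sum.inr (Sum.inl s₀) :: g, Sum.inr (Sum.inr ()), rfl, ?_⟩
    refine SemiSortedAA.Run.step (t := Sum.inl (some s₀))
      (c := some (Sum.inr (Sum.inl s₀))) (rest := g.map some ++ [none]) ?_ ?_ ?_
    · simp [detOf, detStep, hs₀]
    · show ((Fin.cons _ _ : Fin (n+1) → List (BAlpha N)) 0).map some ++ [none] = _
      simp [Fin.cons_zero]
    · apply hg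
      · have htape : ((detOf N).tape ((detOf N).start)) = 0 := rfl
        rw [htape, Function.update_self]
      · intro i
        have htape : ((detOf N).tape ((detOf N).start)) = 0 := rfl
        rw [htape, Function.update_of_ne (Fin.succ_ne_zero i)]
        exact hsucc0 _ i
  · rintro ⟨x₀, fst, hfst, hrun⟩
    have hfst' : fst = Sum.inr (Sum.inr ()) := hfst
    obtain ⟨s₀, hs₀, f', hf', hrunN⟩ :=
      (bwd N hrun hfst' (fun i => (w i).map some ++ [none]) (hsucc0 x₀)).2.2 rfl
    exact (hN w).mpr ⟨s₀, hs₀, f', hf', hrunN⟩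
end

section
/- There exist a finite alphabet A and a weakly regular 2-variable language L over A such that the complement (A*)^2 minus L is not weakly regular. In particular, weakly regular languages are not closed under complementation. -/
namespace NC

inductive Partial (M : SAA Bool 2) :
    M.State → List (Option Bool) → List (Option Bool) → M.State → Prop
  | nil (s : M.State) : Partial M s [] [] s
  | eps {s t f : M.State} {u v} (h : t ∈ M.eps s) (hp : Partial M t u v f) :
      Partial M s u v f
  | step0 {s t f : M.State} {c u v} (h0 : M.tape s = 0) (h : t ∈ M.step s c)
      (hp : Partial M t u v f) : Partial M s (c :: u) v f
  | step1 {s t f : M.State} {c u v} (h1 : M.tape s = 1) (h : t ∈ M.step s c)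
      (hp : Partial M t u v f) : Partial M s u (c :: v) f

variable {M : SAA Bool 2}

lemma fin2 (i : Fin 2) : i = 0 ∨ i = 1 := by omega

lemma run_to_partial {s f : M.State} {r} (h : M.Run s r f) :
    Partial M s (r 0) (r 1) f := by
  induction h with
  | nil s => exact Partial.nil s
  | eps h _ ih => exact Partial.eps h ih
  | @step s t f c rest r h hr _ ih =>
    rcases fin2 (M.tape s) with h0 | h1
    · rw [h0] at hr ih
      rw [Function.update_self, Function.update_of_ne (by decide)] at ih
      rw [hr]
      exact Partial.step0 h0 h ih
    · rw [h1] at hr ih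
      rw [Function.update_self, Function.update_of_ne (by decide)] at ih
      rw [hr]
      exact Partial.step1 h1 h ih

lemma upd_fst (a b x : List (Option Bool)) :
    Function.update ![a, b] (0 : Fin 2) x = ![x, b] := by
  funext i
  rcases fin2 i with rfl | rfl <;> simp

lemma upd_snd (a b x : List (Option Bool)) :
    Function.update ![a, b] (1 : Fin 2) x = ![a, x] := by
  funext i
  rcases fin2 i with rfl | rfl <;> simp

lemma partial_to_run {s f : M.State} {u v} (h : Partial M s u v f) :
    M.Run s ![u, v] f := by
  induction h with
  | nil s =>
    have : (![[], []] : Fin 2 → List (Option Bool)) = fun _ => [] := by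
      funext i; rcases fin2 i with rfl | rfl <;> simp
    rw [this]; exact SAA.Run.nil s
  | eps h _ ih => exact SAA.Run.eps h ih
  | @step0 s t f c u v h0 h _ ih =>
    refine SAA.Run.step (rest := u) h ?_ ?_
    · rw [h0]; simp
    · rw [h0, upd_fst]; exact ih
  | @step1 s t f c u v h1 h _ ih =>
    refine SAA.Run.step (rest := v) h ?_ ?_
    · rw [h1]; simp
    · rw [h1, upd_snd]; exact ih

lemma Partial.trans {s m f : M.State} {u1 v1 u2 v2}
    (h1 : Partial M s u1 v1 m) (h2 : Partial M m u2 v2 f) :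
    Partial M s (u1 ++ u2) (v1 ++ v2) f := by
  induction h1 with
  | nil => simpa using h2
  | eps h _ ih => exact Partial.eps h (ih h2)
  | step0 h0 h _ ih => exact Partial.step0 h0 h (ih h2)
  | step1 h1' h _ ih => exact Partial.step1 h1' h (ih h2)

lemma Partial.cut {s f : M.State} {u v} (h : Partial M s u v f) :
    ∀ v1 v2, v = v1 ++ v2 →
      ∃ u1 u2 q, u = u1 ++ u2 ∧ Partial M s u1 v1 q ∧ Partial M q u2 v2 f := by
  induction h with
  | nil s =>
    intro v1 v2 hv
    obtain ⟨rfl, rfl⟩ : v1 = [] ∧ v2 = [] := List.append_eq_nil_iff.mp hv.symm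
    exact ⟨[], [], s, rfl, Partial.nil s, Partial.nil s⟩
  | eps h _ ih =>
    intro v1 v2 hv
    obtain ⟨u1, u2, q, h1, h2, h3⟩ := ih v1 v2 hv
    exact ⟨u1, u2, q, h1, Partial.eps h h2, h3⟩
  | @step0 s t f c u v h0 h hp ih =>
    intro v1 v2 hv
    obtain ⟨u1, u2, q, rfl, h2, h3⟩ := ih v1 v2 hv
    exact ⟨c :: u1, u2, q, rfl, Partial.step0 h0 h h2, h3⟩
  | @step1 s t f c u v h1 h hp ih =>
    intro v1 v2 hv
    cases v1 with
    | nil =>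
      refine ⟨[], u, s, rfl, Partial.nil s, ?_⟩
      rw [List.nil_append] at hv
      rw [← hv]
      exact Partial.step1 h1 h hp
    | cons d v1' =>
      rw [List.cons_append] at hv
      obtain ⟨rfl, hv'⟩ : c = d ∧ v = v1' ++ v2 := by
        injection hv with h1 h2; exact ⟨h1, h2⟩
      obtain ⟨u1, u2, q, rfl, h2, h3⟩ := ih v1' v2 hv'
      exact ⟨u1, u2, q, rfl, Partial.step1 h1 h h2, h3⟩


/-! ### The machine -/

inductive St
  | B1 | B2a | B2b | S3a | S3b | S3c | S4p | S4a | S4b | S4c | CA0 | CA1 | CB0 | F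
  deriving DecidableEq

instance : Fintype St :=
  Fintype.ofList [St.B1, St.B2a, St.B2b, St.S3a, St.S3b, St.S3c, St.S4p, St.S4a, St.S4b,
    St.S4c, St.CA0, St.CA1, St.CB0, St.F] (fun x => by cases x <;> decide)

open St

def tp : St → Fin 2
  | B1 => 0 | S3a => 0 | S4a => 0 | CA0 => 0 | CB0 => 0 | F => 0
  | _ => 1

def stp : St → Option Bool → Set St
  | B1, some true => {B1, CA0}
  | B1, some false => {B1}
  | B2a, some true => {B2a, B2b}
  | B2a, some false => {B2a}
  | B2b, some false => {B2b, CA0}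
  | B2b, some true => {B2b}
  | S3a, some false => {S3b}
  | S3a, none => {S3c}
  | S3b, some false => {S3a}
  | S3b, some true => {CA0}
  | S3b, none => {CB0}
  | S3c, some false => {CA1}
  | S4p, some false => {S4p}
  | S4a, some false => {S4b}
  | S4a, none => {S4c}
  | S4b, some true => {S4a}
  | S4b, none => {CB0}
  | S4c, some true => {CA1}
  | CA0, some _ => {CA0}
  | CA0, none => {CA1}
  | CA1, some _ => {CA1}
  | CA1, none => {F}
  | CB0, some _ => {CB0}
  | CB0, none => {F}
  | _, _ => ∅

def ep : St → Set St
  | S4p => {S4a}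
  | _ => ∅

def MM : SAA Bool 2 :=
  ⟨St, inferInstance, {B1, B2a, S3a, S4p}, {F}, stp, ep, tp⟩

@[simp] lemma MM_state : MM.State = St := rfl
@[simp] lemma MM_tape : MM.tape = tp := rfl
@[simp] lemma MM_step : MM.step = stp := rfl
@[simp] lemma MM_eps : MM.eps = ep := rfl
@[simp] lemma MM_accept : MM.accept = {F} := rfl
@[simp] lemma MM_start : MM.start = {B1, B2a, S3a, S4p} := rfl

/-! ### Notation for tape contents -/

def rf (p : ℕ) : List Bool := List.replicate p false
def rt (p : ℕ) : List Bool := List.replicate p true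
def pad (w : List Bool) : List (Option Bool) := w.map some ++ [none]

def sf : Option Bool := some false
def stt : Option Bool := some true

lemma pad_append (x y : List Bool) : pad (x ++ y) = x.map some ++ pad y := by
  unfold pad; rw [List.map_append, List.append_assoc]

lemma pad_cons (b : Bool) (z : List Bool) : pad (b :: z) = some b :: pad z := rfl

lemma pad_nil : pad [] = [none] := rfl

lemma rf_succ (p : ℕ) : rf (p + 1) = false :: rf p := rfl
lemma rt_succ (p : ℕ) : rt (p + 1) = true :: rt p := rfl
lemma rf_add (p q : ℕ) : rf (p + q) = rf p ++ rf q := by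
  unfold rf; rw [List.replicate_add]

lemma rt_add (p q : ℕ) : rt (p + q) = rt p ++ rt q := by
  unfold rt; rw [List.replicate_add]

/-! ### Completeness: run constructions -/

lemma run_CA1 (l : List Bool) : Partial MM CA1 [] (pad l) F := by
  induction l with
  | nil => exact Partial.step1 rfl rfl (Partial.nil (M := MM) F)
  | cons b l ih => exact Partial.step1 rfl (by cases b <;> exact rfl) ih

lemma run_CA0 (l0 l1 : List Bool) : Partial MM CA0 (pad l0) (pad l1) F := by
  induction l0 with
  | nil => exact Partial.step0 rfl rfl (run_CA1 l1)
  | cons b l ih => exact Partial.step0 rfl (by cases b <;> exact rfl) ih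

lemma run_CB0 (l : List Bool) : Partial MM CB0 (pad l) [] F := by
  induction l with
  | nil => exact Partial.step0 rfl rfl (Partial.nil (M := MM) F)
  | cons b l ih => exact Partial.step0 rfl (by cases b <;> exact rfl) ih

lemma loop_B1 (x : List Bool) {u v : List (Option Bool)}
    (h : Partial MM B1 u v F) : Partial MM B1 (x.map some ++ u) v F := by
  induction x with
  | nil => exact h
  | cons b x ih =>
    refine Partial.step0 rfl ?_ ih
    cases b
    · exact rfl
    · exact Set.mem_insert _ _

lemma run_B1 (x y v : List Bool) :
    Partial MM B1 (pad (x ++ true :: y)) (pad v) F := by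
  rw [pad_append]
  refine loop_B1 x ?_
  have : pad (true :: y) = stt :: pad y := rfl
  rw [this]
  exact Partial.step0 rfl (by right; rfl) (run_CA0 y v)

lemma loop_B2a (x : List Bool) {u v : List (Option Bool)}
    (h : Partial MM B2a u v F) : Partial MM B2a u (x.map some ++ v) F := by
  induction x with
  | nil => exact h
  | cons b x ih =>
    refine Partial.step1 rfl ?_ ih
    cases b
    · exact rfl
    · exact Set.mem_insert _ _

lemma loop_B2b (x : List Bool) {u v : List (Option Bool)}
    (h : Partial MM B2b u v F) : Partial MM B2b u (x.map some ++ v) F := by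
  induction x with
  | nil => exact h
  | cons b x ih =>
    refine Partial.step1 rfl ?_ ih
    cases b
    · exact Set.mem_insert _ _
    · exact rfl

lemma run_B2a (u x y z : List Bool) :
    Partial MM B2a (pad u) (pad (x ++ true :: (y ++ false :: z))) F := by
  rw [pad_append]
  refine loop_B2a x ?_
  have h1 : pad (true :: (y ++ false :: z)) = stt :: pad (y ++ false :: z) := rfl
  rw [h1]
  refine Partial.step1 rfl (by right; rfl) ?_
  rw [pad_append]
  refine loop_B2b y ?_
  have h2 : pad (false :: z) = sf :: pad z := rfl
  rw [h2]
  exact Partial.step1 rfl (by right; rfl) (run_CA0 u z)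

lemma loop_S3 (k : ℕ) {u v : List (Option Bool)}
    (h : Partial MM S3a u v F) :
    Partial MM S3a ((rf k).map some ++ u) ((rf k).map some ++ v) F := by
  induction k with
  | zero => exact h
  | succ k ih =>
    rw [rf_succ]
    exact Partial.step0 rfl rfl (Partial.step1 rfl rfl ih)

lemma loop_S4 (k : ℕ) {u v : List (Option Bool)}
    (h : Partial MM S4a u v F) :
    Partial MM S4a ((rf k).map some ++ u) ((rt k).map some ++ v) F := by
  induction k with
  | zero => exact h
  | succ k ih =>
    rw [rf_succ, rt_succ]
    exact Partial.step0 rfl rfl (Partial.step1 rfl rfl ih)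

lemma loop_S4p (q : ℕ) {u v : List (Option Bool)}
    (h : Partial MM S4a u v F) :
    Partial MM S4p u ((rf q).map some ++ v) F := by
  induction q with
  | zero => exact Partial.eps rfl h
  | succ q ih =>
    rw [rf_succ]
    exact Partial.step1 rfl rfl (by
      -- back in S4p after consuming one false
      exact ih)

lemma run_S3_gt {p q : ℕ} (r : ℕ) (hpq : p < q) :
    Partial MM S3a (pad (rf p)) (pad (rf q ++ rt r)) F := by
  obtain ⟨d, rfl⟩ : ∃ d, q = p + (d + 1) := ⟨q - p - 1, by omega⟩
  have hsplit : rf (p + (d + 1)) ++ rt r = rf p ++ (false :: (rf d ++ rt r)) := by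
    rw [rf_add, rf_succ, List.append_assoc]; rfl
  rw [hsplit, pad_append, pad_cons]
  have hpad : pad (rf p) = (rf p).map some ++ [none] := rfl
  rw [hpad]
  refine loop_S3 p ?_
  refine Partial.step0 rfl rfl ?_
  exact Partial.step1 rfl rfl (run_CA1 _)

lemma run_S3_lt {p q : ℕ} (r : ℕ) (hqp : q < p) :
    Partial MM S3a (pad (rf p)) (pad (rf q ++ rt r)) F := by
  obtain ⟨d, rfl⟩ : ∃ d, p = q + (d + 1) := ⟨p - q - 1, by omega⟩
  have hsplit : rf (q + (d + 1)) = rf q ++ (false :: rf d) := by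
    rw [rf_add, rf_succ]
  rw [hsplit, pad_append, pad_cons, pad_append]
  refine loop_S3 q ?_
  refine Partial.step0 rfl rfl ?_
  cases r with
  | zero =>
    rw [show rt 0 = [] from rfl, pad_nil]
    exact Partial.step1 rfl rfl (run_CB0 _)
  | succ r =>
    rw [rt_succ, pad_cons]
    exact Partial.step1 rfl rfl (run_CA0 _ _)

lemma run_S4_gt {p r : ℕ} (q : ℕ) (hpr : p < r) :
    Partial MM S4p (pad (rf p)) (pad (rf q ++ rt r)) F := by
  rw [pad_append]
  refine loop_S4p q ?_
  obtain ⟨d, rfl⟩ : ∃ d, r = p + (d + 1) := ⟨r - p - 1, by omega⟩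
  have hsplit : rt (p + (d + 1)) = rt p ++ (true :: rt d) := by
    rw [rt_add, rt_succ]
  rw [hsplit, pad_append, pad_cons]
  have hpad : pad (rf p) = (rf p).map some ++ [none] := rfl
  rw [hpad]
  refine loop_S4 p ?_
  refine Partial.step0 rfl rfl ?_
  exact Partial.step1 rfl rfl (run_CA1 _)

lemma run_S4_lt {p r : ℕ} (q : ℕ) (hrp : r < p) :
    Partial MM S4p (pad (rf p)) (pad (rf q ++ rt r)) F := by
  rw [pad_append]
  refine loop_S4p q ?_
  obtain ⟨d, rfl⟩ : ∃ d, p = r + (d + 1) := ⟨p - r - 1, by omega⟩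
  have hsplit : rf (r + (d + 1)) = rf r ++ (false :: rf d) := by
    rw [rf_add, rf_succ]
  rw [hsplit, pad_append, pad_cons]
  have hpad : pad (rt r) = (rt r).map some ++ [none] := rfl
  rw [hpad]
  refine loop_S4 r ?_
  refine Partial.step0 rfl rfl ?_
  exact Partial.step1 rfl rfl (run_CB0 _)


/-! ### The language -/

def K : Set (Fin 2 → List Bool) :=
  {w | ∃ n, w 0 = rf n ∧ w 1 = rf n ++ rt n}

lemma accepts_of_partial {s : St} (hs : s ∈ MM.start) {w : Fin 2 → List Bool}
    (hp : Partial MM s (pad (w 0)) (pad (w 1)) F) : MM.Accepts w := by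
  refine ⟨s, hs, F, rfl, ?_⟩
  have hr := partial_to_run hp
  have heq : (fun i => (w i).map some ++ [none]) = ![pad (w 0), pad (w 1)] := by
    funext i; rcases fin2 i with rfl | rfl <;> simp [pad]
  rw [heq]
  exact hr

lemma classA (u : List Bool) : (∃ p, u = rf p) ∨ ∃ x y, u = x ++ true :: y := by
  by_cases h : true ∈ u
  · exact Or.inr (List.append_of_mem h)
  · left
    refine ⟨u.length, List.eq_replicate_iff.2 ⟨rfl, fun b hb => ?_⟩⟩
    cases b
    · rfl
    · exact absurd hb h

lemma classB (v : List Bool) :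
    (∃ q r, v = rf q ++ rt r) ∨ ∃ x y z, v = x ++ true :: (y ++ false :: z) := by
  induction v with
  | nil => exact Or.inl ⟨0, 0, rfl⟩
  | cons b v ih =>
    cases b
    · rcases ih with ⟨q, r, rfl⟩ | ⟨x, y, z, rfl⟩
      · exact Or.inl ⟨q + 1, r, by rw [rf_succ, List.cons_append]⟩
      · exact Or.inr ⟨false :: x, y, z, rfl⟩
    · by_cases h : false ∈ v
      · obtain ⟨y, z, rfl⟩ := List.append_of_mem h
        exact Or.inr ⟨[], y, z, rfl⟩
      · refine Or.inl ⟨0, v.length + 1, ?_⟩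
        have hv : v = rt v.length :=
          List.eq_replicate_iff.2 ⟨rfl, fun b hb => by
            cases b
            · exact absurd hb h
            · rfl⟩
        rw [rt_succ, ← hv]
        rfl

lemma completeness {w : Fin 2 → List Bool} (h : w ∉ K) : MM.Accepts w := by
  rcases classA (w 0) with ⟨p, hp⟩ | ⟨x, y, hxy⟩
  · rcases classB (w 1) with ⟨q, r, hqr⟩ | ⟨x, y, z, hxyz⟩
    · rcases Nat.lt_trichotomy q p with hlt | heq | hgt
      · refine accepts_of_partial (s := S3a) (Or.inr (Or.inr (Or.inl rfl))) ?_
        rw [hp, hqr]; exact run_S3_lt r hlt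
      · subst heq
        rcases Nat.lt_trichotomy r q with hlt | heq2 | hgt
        · refine accepts_of_partial (s := S4p) (Or.inr (Or.inr (Or.inr rfl))) ?_
          rw [hp, hqr]; exact run_S4_lt q hlt
        · subst heq2
          exact absurd ⟨r, hp, hqr⟩ h
        · refine accepts_of_partial (s := S4p) (Or.inr (Or.inr (Or.inr rfl))) ?_
          rw [hp, hqr]; exact run_S4_gt q hgt
      · refine accepts_of_partial (s := S3a) (Or.inr (Or.inr (Or.inl rfl))) ?_
        rw [hp, hqr]; exact run_S3_gt r hgt
    · refine accepts_of_partial (s := B2a) (Or.inr (Or.inl rfl)) ?_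
      rw [hxyz]; exact run_B2a (w 0) x y z
  · refine accepts_of_partial (s := B1) (Or.inl rfl) ?_
    rw [hxy]; exact run_B1 x y (w 1)

/-! ### Soundness invariant -/

def T0 (i : ℕ) : List (Option Bool) := pad (rf i)
def Vf (n i : ℕ) : List (Option Bool) := pad (rf i ++ rt n)
def Tr (j : ℕ) : List (Option Bool) := pad (rt j)

lemma T0_zero : T0 0 = [none] := rfl
lemma T0_succ (i : ℕ) : T0 (i + 1) = some false :: T0 i := rfl
lemma Vf_zero (n : ℕ) : Vf n 0 = Tr n := rfl
lemma Vf_succ (n i : ℕ) : Vf n (i + 1) = some false :: Vf n i := rfl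
lemma Tr_zero : Tr 0 = [none] := rfl
lemma Tr_succ (j : ℕ) : Tr (j + 1) = some true :: Tr j := rfl

def Bad (n : ℕ) : St → List (Option Bool) → List (Option Bool) → Prop
  | B1, u, v => (∃ i ≤ n, u = T0 i) ∧ v = Vf n n
  | B2a, u, v => u = T0 n ∧ ((∃ i ≤ n, v = Vf n i) ∨ ∃ j ≤ n, v = Tr j)
  | B2b, u, v => u = T0 n ∧ ∃ j ≤ n, v = Tr j
  | S3a, u, v => ∃ i ≤ n, u = T0 i ∧ v = Vf n i
  | S3b, u, v => ∃ i, 1 ≤ i ∧ i ≤ n ∧ u = T0 (i - 1) ∧ v = Vf n i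
  | S3c, u, v => u = [] ∧ v = Vf n 0
  | S4p, u, v => u = T0 n ∧ ∃ i ≤ n, v = Vf n i
  | S4a, u, v => (u = T0 n ∧ ∃ i ≤ n, v = Vf n i) ∨ ∃ k ≤ n, u = T0 k ∧ v = Tr k
  | S4b, u, v => (1 ≤ n ∧ u = T0 (n - 1) ∧ ∃ i ≤ n, v = Vf n i) ∨
      ∃ k, k + 1 ≤ n ∧ u = T0 k ∧ v = Tr (k + 1)
  | S4c, u, v => u = [] ∧ v = [none]
  | _, _, _ => False

theorem sound_aux {n : ℕ} {s f : MM.State} {u v} (h : Partial MM s u v f)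
    (hf : f ∈ MM.accept) : ¬ Bad n s u v := by
  induction h with
  | nil s =>
    obtain rfl : s = F := hf
    exact id
  | @eps s t f u v h hp ih =>
    cases s <;> simp only [MM_eps, ep] at h
    all_goals try exact h.elim
    -- S4p
    obtain rfl : t = S4a := h
    exact fun hb => ih hf (Or.inl hb)
  | @step0 s t f c u v h0 h hp ih =>
    cases s <;> simp only [MM_tape, tp] at h0 <;> try exact absurd h0 (by decide)
    -- remaining: B1, S3a, S4a, CA0, CB0, F
    case B1 =>
      rintro ⟨⟨i, hi, hu⟩, hv⟩
      rcases i with _ | i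
      · rw [T0_zero] at hu
        injection hu with hc hu'
        subst hc
        simp only [MM_step, stp] at h
        exact h.elim
      · rw [T0_succ] at hu
        injection hu with hc hu'
        subst hc
        simp only [MM_step, stp] at h
        obtain rfl : t = B1 := h
        exact ih hf ⟨⟨i, by omega, hu'⟩, hv⟩
    case S3a =>
      rintro ⟨i, hi, hu, hv⟩
      rcases i with _ | i
      · rw [T0_zero] at hu
        injection hu with hc hu'
        subst hc
        simp only [MM_step, stp] at h
        obtain rfl : t = S3c := h
        exact ih hf ⟨hu', hv⟩
      · rw [T0_succ] at hu
        injection hu with hc hu'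
        subst hc
        simp only [MM_step, stp] at h
        obtain rfl : t = S3b := h
        exact ih hf ⟨i + 1, by omega, by omega, by simpa using hu', hv⟩
    case S4a =>
      rintro (⟨hu, i, hi, hv⟩ | ⟨k, hk, hu, hv⟩)
      · rcases n with _ | m
        · rw [T0_zero] at hu
          injection hu with hc hu'
          subst hc
          simp only [MM_step, stp] at h
          obtain rfl : t = S4c := h
          obtain rfl : i = 0 := by omega
          exact ih hf ⟨hu', hv⟩
        · rw [T0_succ] at hu
          injection hu with hc hu'
          subst hc
          simp only [MM_step, stp] at h
          obtain rfl : t = S4b := h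
          exact ih hf (Or.inl ⟨by omega, by simpa using hu', i, hi, hv⟩)
      · rcases k with _ | k
        · rw [T0_zero] at hu
          injection hu with hc hu'
          subst hc
          simp only [MM_step, stp] at h
          obtain rfl : t = S4c := h
          rw [Tr_zero] at hv
          exact ih hf ⟨hu', hv⟩
        · rw [T0_succ] at hu
          injection hu with hc hu'
          subst hc
          simp only [MM_step, stp] at h
          obtain rfl : t = S4b := h
          exact ih hf (Or.inr ⟨k, by omega, hu', hv⟩)
    case CA0 => exact id
    case CB0 => exact id
    case F => exact id
  | @step1 s t f c u v h1 h hp ih =>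
    cases s <;> simp only [MM_tape, tp] at h1 <;> try exact absurd h1 (by decide)
    case B2a =>
      rintro ⟨hu, (⟨i, hi, hv⟩ | ⟨j, hj, hv⟩)⟩
      · rcases i with _ | i
        · rw [Vf_zero] at hv
          rcases n with _ | m
          · rw [Tr_zero] at hv
            injection hv with hc hv'
            subst hc
            simp only [MM_step, stp] at h
            exact h.elim
          · rw [Tr_succ] at hv
            injection hv with hc hv'
            subst hc
            simp only [MM_step, stp, Set.mem_insert_iff, Set.mem_singleton_iff] at h
            rcases h with rfl | rfl
            · exact ih hf ⟨hu, Or.inr ⟨m, by omega, hv'⟩⟩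
            · exact ih hf ⟨hu, m, by omega, hv'⟩
        · rw [Vf_succ] at hv
          injection hv with hc hv'
          subst hc
          simp only [MM_step, stp] at h
          obtain rfl : t = B2a := h
          exact ih hf ⟨hu, Or.inl ⟨i, by omega, hv'⟩⟩
      · rcases j with _ | j
        · rw [Tr_zero] at hv
          injection hv with hc hv'
          subst hc
          simp only [MM_step, stp] at h
          exact h.elim
        · rw [Tr_succ] at hv
          injection hv with hc hv'
          subst hc
          simp only [MM_step, stp, Set.mem_insert_iff, Set.mem_singleton_iff] at h
          rcases h with rfl | rfl
          · exact ih hf ⟨hu, Or.inr ⟨j, by omega, hv'⟩⟩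
          · exact ih hf ⟨hu, j, by omega, hv'⟩
    case B2b =>
      rintro ⟨hu, j, hj, hv⟩
      rcases j with _ | j
      · rw [Tr_zero] at hv
        injection hv with hc hv'
        subst hc
        simp only [MM_step, stp] at h
        exact h.elim
      · rw [Tr_succ] at hv
        injection hv with hc hv'
        subst hc
        simp only [MM_step, stp] at h
        obtain rfl : t = B2b := h
        exact ih hf ⟨hu, j, by omega, hv'⟩
    case S3b =>
      rintro ⟨i, hi1, hin, hu, hv⟩
      obtain ⟨m, rfl⟩ : ∃ m, i = m + 1 := ⟨i - 1, by omega⟩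
      rw [Vf_succ] at hv
      injection hv with hc hv'
      subst hc
      simp only [MM_step, stp] at h
      obtain rfl : t = S3a := h
      exact ih hf ⟨m, by omega, by simpa using hu, hv'⟩
    case S3c =>
      rintro ⟨hu, hv⟩
      rw [Vf_zero] at hv
      rcases n with _ | m
      · rw [Tr_zero] at hv
        injection hv with hc hv'
        subst hc
        simp only [MM_step, stp] at h
        exact h.elim
      · rw [Tr_succ] at hv
        injection hv with hc hv'
        subst hc
        simp only [MM_step, stp] at h
        exact h.elim
    case S4p =>
      rintro ⟨hu, i, hi, hv⟩
      rcases i with _ | i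
      · rw [Vf_zero] at hv
        rcases n with _ | m
        · rw [Tr_zero] at hv
          injection hv with hc hv'
          subst hc
          simp only [MM_step, stp] at h
          exact h.elim
        · rw [Tr_succ] at hv
          injection hv with hc hv'
          subst hc
          simp only [MM_step, stp] at h
          exact h.elim
      · rw [Vf_succ] at hv
        injection hv with hc hv'
        subst hc
        simp only [MM_step, stp] at h
        obtain rfl : t = S4p := h
        exact ih hf ⟨hu, i, by omega, hv'⟩
    case S4b =>
      rintro (⟨hn, hu, i, hi, hv⟩ | ⟨k, hk, hu, hv⟩)
      · rcases i with _ | i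
        · rw [Vf_zero] at hv
          obtain ⟨m, rfl⟩ : ∃ m, n = m + 1 := ⟨n - 1, by omega⟩
          rw [Tr_succ] at hv
          injection hv with hc hv'
          subst hc
          simp only [MM_step, stp] at h
          obtain rfl : t = S4a := h
          exact ih hf (Or.inr ⟨m, by omega, by simpa using hu, hv'⟩)
        · rw [Vf_succ] at hv
          injection hv with hc hv'
          subst hc
          simp only [MM_step, stp] at h
          exact h.elim
      · rw [Tr_succ] at hv
        injection hv with hc hv'
        subst hc
        simp only [MM_step, stp] at h
        obtain rfl : t = S4a := h
        exact ih hf (Or.inr ⟨k, by omega, hu, hv'⟩)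
    case S4c =>
      rintro ⟨hu, hv⟩
      injection hv with hc hv'
      subst hc
      simp only [MM_step, stp] at h
      exact h.elim
    case CA1 => exact id

theorem sound {w : Fin 2 → List Bool} (hA : MM.Accepts w) : w ∉ K := by
  rintro ⟨n, h0, h1⟩
  obtain ⟨s₀, hs, f, hf, hr⟩ := hA
  have hp : Partial MM s₀ (pad (w 0)) (pad (w 1)) f := run_to_partial hr
  rw [h0, h1] at hp
  refine sound_aux (n := n) hp hf ?_
  simp only [MM_start, Set.mem_insert_iff, Set.mem_singleton_iff] at hs
  rcases hs with rfl | rfl | rfl | rfl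
  · exact ⟨⟨n, le_rfl, rfl⟩, rfl⟩
  · exact ⟨rfl, Or.inl ⟨n, le_rfl, rfl⟩⟩
  · exact ⟨n, le_rfl, rfl, rfl⟩
  · exact ⟨rfl, n, le_rfl, rfl⟩

theorem Kc_weakly_regular : IsWeaklyRegular Kᶜ :=
  ⟨MM, fun w => ⟨fun h => completeness h, fun h => sound h⟩⟩


/-! ### Negative part: K is not weakly regular -/

lemma accepts_of_partial' {M' : SAA Bool 2} {s f : M'.State}
    (hs : s ∈ M'.start) (hf : f ∈ M'.accept) {w0 w1 : List Bool}
    (hp : Partial M' s (pad w0) (pad w1) f) : M'.Accepts ![w0, w1] := by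
  refine ⟨s, hs, f, hf, ?_⟩
  have heq : (fun i => ((![w0, w1] : Fin 2 → List Bool) i).map some ++ [none])
      = ![pad w0, pad w1] := by
    funext i; rcases fin2 i with rfl | rfl <;> simp [pad]
  rw [heq]
  exact partial_to_run hp

lemma split_pad {u1 u2 : List (Option Bool)} {n : ℕ}
    (h : u1 ++ u2 = (rf n).map some ++ [none]) :
    (∃ j ≤ n, u1 = (rf j).map some ∧ u2 = (rf (n - j)).map some ++ [none]) ∨
      (u1 = (rf n).map some ++ [none] ∧ u2 = []) := by
  induction u1 generalizing n with
  | nil =>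
    left
    exact ⟨0, Nat.zero_le n, rfl, by simpa using h⟩
  | cons c u1 ih =>
    rcases n with _ | m
    · right
      rw [List.cons_append] at h
      have h' : c :: (u1 ++ u2) = [none] := by simpa [rf] using h
      injection h' with hc htail
      subst hc
      obtain ⟨rfl, rfl⟩ := List.append_eq_nil_iff.mp htail
      exact ⟨by simp [rf], rfl⟩
    · rw [List.cons_append] at h
      have hrfs : (rf (m + 1)).map some ++ [none]
          = some false :: ((rf m).map some ++ [none]) := by
        rw [rf_succ]; rfl
      rw [hrfs] at h
      injection h with hc htail
      subst hc
      rcases ih htail with ⟨j, hj, rfl, rfl⟩ | ⟨rfl, rfl⟩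
      · left
        refine ⟨j + 1, by omega, by rw [rf_succ]; rfl, ?_⟩
        rw [Nat.succ_sub_succ]
      · right
        exact ⟨by rw [rf_succ]; rfl, rfl⟩

lemma padsplit (n m : ℕ) (hm : 1 ≤ m) :
    pad (rf n ++ rt m) =
      ((rf n).map some ++ [some true]) ++ ((rt (m - 1)).map some ++ [none]) := by
  obtain ⟨k, rfl⟩ : ∃ k, m = k + 1 := ⟨m - 1, by omega⟩
  rw [pad_append, rt_succ, pad_cons]
  simp [pad]

lemma K_shape {a b N : ℕ} (h : rf a ++ rt b = rf N ++ rt N) : a = N ∧ b = N := by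
  have ha := congrArg (List.count false) h
  have hb := congrArg (List.count true) h
  simp [rf, rt, List.count_append, List.count_replicate] at ha hb
  exact ⟨ha, hb⟩

def PreS (M' : SAA Bool 2) (n : ℕ) (q : M'.State) : Bool → Prop
  | true => ∃ s₀ ∈ M'.start,
      Partial M' s₀ (pad (rf n)) ((rf n).map some ++ [some true]) q
  | false => ∃ j, ∃ s₀ ∈ M'.start,
      Partial M' s₀ ((rf j).map some) ((rf n).map some ++ [some true]) q

def SufS (M' : SAA Bool 2) (n : ℕ) (q : M'.State) : Bool → Prop
  | true => ∃ f ∈ M'.accept,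
      Partial M' q [] ((rt (n - 1)).map some ++ [none]) f
  | false => ∃ k, ∃ f ∈ M'.accept,
      Partial M' q ((rf k).map some ++ [none]) ((rt (n - 1)).map some ++ [none]) f

lemma extract {M' : SAA Bool 2} (hM : ∀ w, w ∈ K ↔ M'.Accepts w)
    (n : ℕ) (hn : 1 ≤ n) : ∃ q b, PreS M' n q b ∧ SufS M' n q b := by
  have hacc : M'.Accepts ![rf n, rf n ++ rt n] :=
    (hM _).1 ⟨n, by simp, by simp⟩
  obtain ⟨s₀, hs, f, hf, hr⟩ := hacc
  have hp := run_to_partial hr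
  simp only [Matrix.cons_val_zero, Matrix.cons_val_one, Matrix.head_cons] at hp
  have hp' : Partial M' s₀ (pad (rf n)) (pad (rf n ++ rt n)) f := hp
  rw [padsplit n n hn] at hp'
  obtain ⟨u1, u2, q, hu, hpre, hsuf⟩ := Partial.cut hp' _ _ rfl
  rcases split_pad (hu.symm : u1 ++ u2 = (rf n).map some ++ [none]) with
    ⟨j, hj, rfl, rfl⟩ | ⟨rfl, rfl⟩
  · exact ⟨q, false, ⟨j, s₀, hs, hpre⟩, ⟨n - j, f, hf, hsuf⟩⟩
  · exact ⟨q, true, ⟨s₀, hs, hpre⟩, ⟨f, hf, hsuf⟩⟩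

lemma splice {M' : SAA Bool 2} (hM : ∀ w, w ∈ K ↔ M'.Accepts w)
    {n m : ℕ} (hm : 1 ≤ m) (hnm : n ≠ m) {q : M'.State} {b : Bool}
    (h1 : PreS M' n q b) (h2 : SufS M' m q b) : False := by
  cases b
  · obtain ⟨j, s₀, hs, P1⟩ := h1
    obtain ⟨k, f, hf, P2⟩ := h2
    have htr := Partial.trans P1 P2
    have hu : (rf j).map some ++ ((rf k).map some ++ [none]) = pad (rf (j + k)) := by
      rw [rf_add, pad_append]; rfl
    have hv : ((rf n).map some ++ [some true]) ++ ((rt (m - 1)).map some ++ [none])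
        = pad (rf n ++ rt m) := (padsplit n m hm).symm
    rw [hu, hv] at htr
    have hK : ![rf (j + k), rf n ++ rt m] ∈ K :=
      (hM _).2 (accepts_of_partial' hs hf htr)
    obtain ⟨N, e0, e1⟩ := hK
    simp only [Matrix.cons_val_one, Matrix.head_cons] at e1
    obtain ⟨rfl, rfl⟩ := K_shape e1
    exact hnm rfl
  · obtain ⟨s₀, hs, P1⟩ := h1
    obtain ⟨f, hf, P2⟩ := h2
    have htr := Partial.trans P1 P2
    rw [List.append_nil] at htr
    have hv : ((rf n).map some ++ [some true]) ++ ((rt (m - 1)).map some ++ [none])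
        = pad (rf n ++ rt m) := (padsplit n m hm).symm
    rw [hv] at htr
    have hK : ![rf n, rf n ++ rt m] ∈ K :=
      (hM _).2 (accepts_of_partial' hs hf htr)
    obtain ⟨N, e0, e1⟩ := hK
    simp only [Matrix.cons_val_one, Matrix.head_cons] at e1
    obtain ⟨rfl, rfl⟩ := K_shape e1
    exact hnm rfl

theorem K_not_weakly_regular : ¬ IsWeaklyRegular K := by
  rintro ⟨M', hM⟩
  letI : Fintype M'.State := M'.fintype
  set N := Fintype.card M'.State with hN
  have key : ∀ i : Fin (2 * N + 1),
      ∃ qb : M'.State × Bool, PreS M' (i.1 + 1) qb.1 qb.2 ∧ SufS M' (i.1 + 1) qb.1 qb.2 := by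
    intro i
    obtain ⟨q, b, h1, h2⟩ := extract hM (i.1 + 1) (by omega)
    exact ⟨(q, b), h1, h2⟩
  choose g hg using key
  have hcard : Fintype.card (M'.State × Bool) < Fintype.card (Fin (2 * N + 1)) := by
    rw [Fintype.card_prod, Fintype.card_bool, Fintype.card_fin, ← hN]
    omega
  obtain ⟨i, i', hne, heq⟩ := Fintype.exists_ne_map_eq_of_card_lt g hcard
  have h2' := (hg i').2
  rw [← heq] at h2'
  exact splice hM (by omega) (fun h => hne (Fin.ext (by omega))) (hg i).1 h2'

theorem final :
    ∃ (A : Type) (_ : Fintype A) (L : Set (Fin 2 → List A)),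
      IsWeaklyRegular L ∧ ¬ IsWeaklyRegular Lᶜ := by
  refine ⟨Bool, inferInstance, Kᶜ, Kc_weakly_regular, ?_⟩
  rw [compl_compl]
  exact K_not_weakly_regular

end NC

/-- Weakly regular languages are not closed under complementation: there are a
finite alphabet `A` and a weakly regular two-variable language `L` over `A` whose
complement is not weakly regular. -/
theorem weaklyRegular_not_closed_under_compl :
    ∃ (A : Type) (_ : Fintype A) (L : Set (Fin 2 → List A)),
      IsWeaklyRegular L ∧ ¬ IsWeaklyRegular Lᶜ := by
  refine ⟨Bool, inferInstance, NC.Kᶜ, NC.Kc_weakly_regular, ?_⟩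
  rw [compl_compl]
  exact NC.K_not_weakly_regular
end
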